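/- arXiv:1904.05551 — 16 statements merged into one kernel-verified Lean document; each statement's English description precedes it below -/
import Mathlib

section
/- Let m and F be integers with (m,F) ≠ (1,-1). There exists a numerical semigroup with multiplicity m and Frobenius number F if and only if F ≥ m-1 ≥ 1 and m does not divide F. -/
/-- A numerical semigroup: a cofinite submonoid of (ℕ, +). -/
def IsNumericalSemigroup (S : Set ℕ) : Prop :=
  0 ∈ S ∧ (∀ a ∈ S, ∀ b ∈ S, a + b ∈ S) ∧ Sᶜ.Finite

/-- `m` is the multiplicity of `S`: its least positive element. -/
def HasMultiplicity (S : Set ℕ) (m : ℕ) : Prop :=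
  m ∈ S ∧ 0 < m ∧ ∀ s ∈ S, 0 < s → m ≤ s

/-- `F` is the Frobenius number of `S`: the largest non-element. -/
def HasFrobenius (S : Set ℕ) (F : ℕ) : Prop :=
  F ∉ S ∧ ∀ x : ℕ, F < x → x ∈ S

/-- `S` is an irreducible numerical semigroup: it is not the intersection of
two numerical semigroups properly containing it. -/
def IsIrreducibleNS (S : Set ℕ) : Prop :=
  IsNumericalSemigroup S ∧
    ¬ ∃ S₁ S₂ : Set ℕ, IsNumericalSemigroup S₁ ∧ IsNumericalSemigroup S₂ ∧
      S ⊂ S₁ ∧ S ⊂ S₂ ∧ S = S₁ ∩ S₂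

/--  is the multiplicity of  viewed inside ℤ. -/
def HasMultiplicityZ (S : Set ℕ) (m : ℤ) : Prop :=
  m ∈ (Nat.cast '' S : Set ℤ) ∧ 0 < m ∧ ∀ y ∈ (Nat.cast '' S : Set ℤ), 0 < y → m ≤ y

/--  is the Frobenius number of : the largest integer not in . -/
def HasFrobeniusZ (S : Set ℕ) (F : ℤ) : Prop :=
  F ∉ (Nat.cast '' S : Set ℤ) ∧ ∀ y : ℤ, y ∉ (Nat.cast '' S : Set ℤ) → y ≤ F

theorem stmt0 (m F : ℤ) (h : (m, F) ≠ (1, -1)) :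
    (∃ S : Set ℕ, IsNumericalSemigroup S ∧ HasMultiplicityZ S m ∧ HasFrobeniusZ S F) ↔
      (F ≥ m - 1 ∧ m - 1 ≥ 1 ∧ ¬ m ∣ F) := by
  constructor
  · rintro ⟨S, ⟨h0, hadd, hfin⟩, ⟨hmS, hmpos, hmin⟩, hFS, hFmax⟩
    obtain ⟨m', hm'S, hm'⟩ := hmS
    have hm'pos : 0 < m' := by omega
    have hm'2 : 2 ≤ m' := by
      by_contra hc
      have hm1 : m' = 1 := by omega
      have hall : ∀ n : ℕ, n ∈ S := by
        intro n
        induction n with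
        | zero => exact h0
        | succ k ih => exact hadd k ih 1 (hm1 ▸ hm'S)
      have hFneg : F < 0 := by
        by_contra hFn
        exact hFS ⟨F.toNat, hall _, by omega⟩
      have hle : (-1 : ℤ) ≤ F := hFmax (-1) (by rintro ⟨n, _, hn⟩; omega)
      apply h
      have : F = -1 := by omega
      have : m = 1 := by omega
      simp_all
    have hFge : F ≥ m - 1 := by
      have hnotin : (↑(m' - 1) : ℤ) ∉ (Nat.cast '' S : Set ℤ) := by
        rintro ⟨n, hn, hcast⟩
        have hnpos : 0 < n := by omega
        have := hmin (↑n) ⟨n, hn, rfl⟩ (by exact_mod_cast hnpos)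
        omega
      have := hFmax _ hnotin
      omega
    refine ⟨hFge, by omega, ?_⟩
    rintro ⟨k, hk⟩
    have hkpos : 0 < k := by nlinarith
    have hmul : ∀ j : ℕ, 0 < j → j * m' ∈ S := by
      intro j hj
      induction j with
      | zero => omega
      | succ i ih =>
        rcases Nat.eq_zero_or_pos i with hi | hi
        · subst hi; simpa using hm'S
        · have := hadd _ (ih hi) _ hm'S
          convert this using 1
          ring
    apply hFS
    refine ⟨k.toNat * m', hmul _ (by omega), ?_⟩
    push_cast
    rw [show ((k.toNat : ℤ)) = k by omega, hm']
    linarith [hk]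
  · rintro ⟨hF1, hm1, hnd⟩
    set m' := m.toNat with hm'def
    set F' := F.toNat with hF'def
    have hmeq : (m' : ℤ) = m := by omega
    have hFeq : (F' : ℤ) = F := by omega
    have hm'F' : m' ≤ F' + 1 := by omega
    have hndnat : ¬ m' ∣ F' := by
      intro hd
      exact hnd (by rw [← hmeq, ← hFeq]; exact_mod_cast hd)
    refine ⟨{n | m' ∣ n ∨ F' < n}, ⟨Or.inl (dvd_zero _), ?_, ?_⟩, ⟨⟨m', Or.inl dvd_rfl, hmeq⟩, by omega, ?_⟩, ?_, ?_⟩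
    · rintro a (ha | ha) b (hb | hb)
      · exact Or.inl (dvd_add ha hb)
      · exact Or.inr (by omega)
      · exact Or.inr (by omega)
      · exact Or.inr (by omega)
    · apply Set.Finite.subset (Set.finite_Iic F')
      intro n hn
      simp only [Set.mem_compl_iff, Set.mem_setOf_eq, not_or] at hn
      exact Set.mem_Iic.mpr (by omega)
    · rintro y ⟨n, (hn | hn), rfl⟩ hy
      · have : m' ≤ n := Nat.le_of_dvd (by exact_mod_cast hy) hn
        omega
      · omega
    · rintro ⟨n, (hn | hn), hcast⟩
      · exact hndnat (by rwa [show n = F' by omega] at hn)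
      · omega
    · intro y hy
      by_contra hc
      push_neg at hc
      exact hy ⟨y.toNat, Or.inr (by omega), by omega⟩
end

section
/- If F ≥ m-1 ≥ 1 and m ∤ F, then the set S = ⟨m⟩ ∪ {F+1, F+2, ...} is a numerical semigroup with multiplicity m and Frobenius number F, and it is contained in every numerical semigroup with multiplicity m and Frobenius number F. -/
theorem stmt1 (m F : ℕ) (h1 : (F : ℤ) ≥ (m : ℤ) - 1) (h2 : (m : ℤ) - 1 ≥ 1)
    (h3 : ¬ m ∣ F) :
    IsNumericalSemigroup ({x | m ∣ x} ∪ {x | F < x}) ∧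
    HasMultiplicity ({x | m ∣ x} ∪ {x | F < x}) m ∧
    HasFrobenius ({x | m ∣ x} ∪ {x | F < x}) F ∧
    ∀ T : Set ℕ, IsNumericalSemigroup T → HasMultiplicity T m → HasFrobenius T F →
      ({x | m ∣ x} ∪ {x | F < x}) ⊆ T := by
  have hm : 2 ≤ m := by omega
  have hF : m - 1 ≤ F := by omega
  refine ⟨⟨Or.inl ⟨0, rfl⟩, ?_, ?_⟩, ⟨Or.inl dvd_rfl, by omega, ?_⟩, ⟨?_, fun x hx => Or.inr hx⟩, ?_⟩
  · rintro a (ha | ha) b (hb | hb)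
    · exact Or.inl (dvd_add ha hb)
    · rcases Nat.eq_zero_or_pos a with rfl | h
      · simpa using Or.inr hb
      · exact Or.inr (by simp only [Set.mem_setOf_eq] at hb ⊢; omega)
    · rcases Nat.eq_zero_or_pos b with rfl | h
      · simpa using Or.inr ha
      · exact Or.inr (by simp only [Set.mem_setOf_eq] at ha ⊢; omega)
    · exact Or.inr (by simp only [Set.mem_setOf_eq] at ha ⊢; omega)
  · apply Set.Finite.subset (Set.finite_Iic F)
    intro x hx
    simp only [Set.mem_compl_iff, Set.mem_union, Set.mem_setOf_eq, not_or, not_lt] at hx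
    exact hx.2
  · rintro s (hs | hs) hpos
    · exact Nat.le_of_dvd hpos hs
    · simp only [Set.mem_setOf_eq] at hs; omega
  · rintro (h | h)
    · exact h3 h
    · simp only [Set.mem_setOf_eq] at h; omega
  · rintro T ⟨h0, hadd, -⟩ ⟨hmT, -, -⟩ ⟨-, hFT⟩ x (hx | hx)
    · obtain ⟨k, rfl⟩ := hx
      induction k with
      | zero => simpa using h0
      | succ n ih =>
        have : m * n + m ∈ T := hadd _ ih _ hmT
        simpa [Nat.mul_succ] using this
    · exact hFT x hx
end

section
/- Let m ≥ 2 and m < F < 2m. The numerical semigroups with multiplicity m and Frobenius number F are exactly the sets of the form {0, m} ∪ A ∪ {F+1, F+2, ...} where A is any subset of {m+1, ..., F-1}. -/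
theorem stmt3 (m F : ℕ) (hm : 2 ≤ m) (h1 : m < F) (h2 : F < 2 * m) (S : Set ℕ) :
    (IsNumericalSemigroup S ∧ HasMultiplicity S m ∧ HasFrobenius S F) ↔
      ∃ A ⊆ Set.Icc (m + 1) (F - 1), S = {0, m} ∪ A ∪ {x | F < x} := by
  constructor
  · rintro ⟨⟨h0, hadd, hfin⟩, ⟨hmS, hmpos, hmin⟩, ⟨hF, hgt⟩⟩
    refine ⟨S ∩ Set.Icc (m + 1) (F - 1), Set.inter_subset_right, ?_⟩
    ext x
    simp only [Set.mem_union, Set.mem_insert_iff, Set.mem_singleton_iff, Set.mem_setOf_eq,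
      Set.mem_inter_iff, Set.mem_Icc]
    constructor
    · intro hx
      rcases Nat.eq_zero_or_pos x with rfl | hxpos
      · tauto
      have hmx := hmin x hx hxpos
      rcases lt_trichotomy x F with hxF | rfl | hxF
      · rcases eq_or_lt_of_le hmx with heq | hlt
        · tauto
        · exact Or.inl (Or.inr ⟨hx, by omega, by omega⟩)
      · exact absurd hx hF
      · tauto
    · rintro (((rfl | rfl) | ⟨hx, -, -⟩) | hx)
      · exact h0
      · exact hmS
      · exact hx
      · exact hgt x hx
  · rintro ⟨A, hA, rfl⟩
    have hiff : ∀ x : ℕ, x ∈ ({0, m} ∪ A ∪ {x | F < x} : Set ℕ) ↔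
        (x = 0 ∨ x = m ∨ x ∈ A ∨ F < x) := by
      intro x
      simp only [Set.mem_union, Set.mem_insert_iff, Set.mem_singleton_iff, Set.mem_setOf_eq]
      tauto
    have hmem : ∀ x, x ∈ ({0, m} ∪ A ∪ {x | F < x} : Set ℕ) → x = 0 ∨ m ≤ x := by
      intro x hx
      rcases (hiff x).1 hx with rfl | rfl | h | h
      · tauto
      · tauto
      · have := (hA h).1; omega
      · omega
    refine ⟨⟨(hiff 0).2 (by tauto), ?_, ?_⟩, ⟨(hiff m).2 (by tauto), by omega, ?_⟩,
      ?_, fun x hx => (hiff x).2 (by tauto)⟩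
    · intro a ha b hb
      rcases hmem a ha with rfl | hma
      · simpa using hb
      rcases hmem b hb with rfl | hmb
      · simpa using ha
      exact (hiff _).2 (Or.inr (Or.inr (Or.inr (by omega))))
    · refine Set.Finite.subset (Set.finite_Iic F) ?_
      intro x hx
      simp only [Set.mem_compl_iff] at hx
      by_contra h
      exact hx ((hiff x).2 (Or.inr (Or.inr (Or.inr (by simpa using h)))))
    · intro s hs hspos
      rcases hmem s hs with rfl | h
      · omega
      · exact h
    · intro hFS
      rcases (hiff F).1 hFS with rfl | rfl | h | h
      · omega
      · omega
      · have := (hA h).2; omega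
      · omega
end

section
/- Let S₁ and S₂ be numerical semigroups with the same multiplicity m and the same Frobenius number F, such that {s ∈ S₁ : m < s < F/2} = {s ∈ S₂ : m < s < F/2}. Then S₁ ∪ S₂ is a numerical semigroup with multiplicity m and Frobenius number F. -/
theorem stmt5 (m F : ℕ) (S₁ S₂ : Set ℕ)
    (h₁ : IsNumericalSemigroup S₁) (h₂ : IsNumericalSemigroup S₂)
    (hm₁ : HasMultiplicity S₁ m) (hm₂ : HasMultiplicity S₂ m)
    (hF₁ : HasFrobenius S₁ F) (hF₂ : HasFrobenius S₂ F)
    (hθ : {s ∈ S₁ | m < s ∧ 2 * s < F} = {s ∈ S₂ | m < s ∧ 2 * s < F}) :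
    IsNumericalSemigroup (S₁ ∪ S₂) ∧ HasMultiplicity (S₁ ∪ S₂) m ∧
      HasFrobenius (S₁ ∪ S₂) F := by
  obtain ⟨h10, h1add, h1fin⟩ := h₁
  obtain ⟨h20, h2add, h2fin⟩ := h₂
  -- small elements transfer
  have t12 : ∀ x ∈ S₁, 0 < x → 2 * x < F → x ∈ S₂ := by
    intro x hx hx0 hxF
    rcases eq_or_lt_of_le (hm₁.2.2 x hx hx0) with h | h
    · exact h ▸ hm₂.1
    · have : x ∈ {s ∈ S₂ | m < s ∧ 2 * s < F} := hθ ▸ ⟨hx, h, hxF⟩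
      exact this.1
  have t21 : ∀ x ∈ S₂, 0 < x → 2 * x < F → x ∈ S₁ := by
    intro x hx hx0 hxF
    rcases eq_or_lt_of_le (hm₂.2.2 x hx hx0) with h | h
    · exact h ▸ hm₁.1
    · have : x ∈ {s ∈ S₁ | m < s ∧ 2 * s < F} := hθ.symm ▸ ⟨hx, h, hxF⟩
      exact this.1
  have key : ∀ x ∈ S₁, ∀ y ∈ S₂, x + y ∈ S₁ ∪ S₂ := by
    intro x hx y hy
    by_cases hbig : F < x + y
    · exact Or.inl (hF₁.2 _ hbig)
    push_neg at hbig
    rcases Nat.eq_zero_or_pos x with hx0 | hx0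
    · subst hx0; exact Or.inr (by simpa using hy)
    rcases Nat.eq_zero_or_pos y with hy0 | hy0
    · subst hy0; exact Or.inl (by simpa using hx)
    by_cases hxF : 2 * x < F
    · exact Or.inr (h2add x (t12 x hx hx0 hxF) y hy)
    by_cases hyF : 2 * y < F
    · exact Or.inl (h1add x hx y (t21 y hy hy0 hyF))
    -- 2x ≥ F, 2y ≥ F, x + y ≤ F forces x = y, 2x = F = x + y ∈ S₁, contradiction
    push_neg at hxF hyF
    have hxy : x + y = F := by omega
    have hxeq : x = y := by omega
    exfalso
    exact hF₁.1 (hxy ▸ hxeq ▸ h1add x hx x hx)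
  refine ⟨⟨Or.inl h10, ?_, ?_⟩, ⟨Or.inl hm₁.1, hm₁.2.1, ?_⟩, ?_, ?_⟩
  · rintro a (ha | ha) b (hb | hb)
    · exact Or.inl (h1add a ha b hb)
    · exact key a ha b hb
    · have := key b hb a ha; rwa [Nat.add_comm] at this
    · exact Or.inr (h2add a ha b hb)
  · exact h1fin.subset (by intro x hx; simp only [Set.mem_compl_iff, Set.mem_union] at *; tauto)
  · rintro s (hs | hs) hs0
    · exact hm₁.2.2 s hs hs0
    · exact hm₂.2.2 s hs hs0
  · rintro (h | h)
    · exact hF₁.1 h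
    · exact hF₂.1 h
  · intro x hx; exact Or.inl (hF₁.2 x hx)
end

section
/- Let S₁ and S₂ be numerical semigroups with the same multiplicity m and the same Frobenius number F, such that {s ∈ S₁ : m < s < F/2} = {s ∈ S₂ : m < s < F/2}. Then S₁ ∩ S₂ is a numerical semigroup with multiplicity m and Frobenius number F whose set {s : m < s < F/2} equals that of S₁. -/
theorem stmt6 (m F : ℕ) (S₁ S₂ : Set ℕ)
    (h₁ : IsNumericalSemigroup S₁) (h₂ : IsNumericalSemigroup S₂)
    (hm₁ : HasMultiplicity S₁ m) (hm₂ : HasMultiplicity S₂ m)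
    (hF₁ : HasFrobenius S₁ F) (hF₂ : HasFrobenius S₂ F)
    (hθ : {s ∈ S₁ | m < s ∧ 2 * s < F} = {s ∈ S₂ | m < s ∧ 2 * s < F}) :
    IsNumericalSemigroup (S₁ ∩ S₂) ∧ HasMultiplicity (S₁ ∩ S₂) m ∧
      HasFrobenius (S₁ ∩ S₂) F ∧
      {s ∈ S₁ ∩ S₂ | m < s ∧ 2 * s < F} = {s ∈ S₁ | m < s ∧ 2 * s < F} := by
  obtain ⟨z1, add1, fin1⟩ := h₁
  obtain ⟨z2, add2, fin2⟩ := h₂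
  refine ⟨⟨⟨z1, z2⟩, fun a ha b hb => ⟨add1 a ha.1 b hb.1, add2 a ha.2 b hb.2⟩, ?_⟩,
    ⟨⟨hm₁.1, hm₂.1⟩, hm₁.2.1, fun s hs hs' => hm₁.2.2 s hs.1 hs'⟩,
    ⟨fun h => hF₁.1 h.1, fun x hx => ⟨hF₁.2 x hx, hF₂.2 x hx⟩⟩, ?_⟩
  · rw [Set.compl_inter]; exact fin1.union fin2
  · ext s
    simp only [Set.mem_setOf_eq, Set.mem_inter_iff]
    constructor
    · rintro ⟨⟨h1, _⟩, h3⟩; exact ⟨h1, h3⟩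
    · rintro ⟨h1, h3⟩
      have : s ∈ {s ∈ S₂ | m < s ∧ 2 * s < F} := hθ ▸ ⟨h1, h3⟩
      exact ⟨⟨h1, this.1⟩, h3⟩
end

section
/- A numerical semigroup S is irreducible if and only if it is maximal (with respect to inclusion) among all numerical semigroups with Frobenius number F(S). -/
theorem stmt7 (S : Set ℕ) (F : ℕ) (hS : IsNumericalSemigroup S)
    (hF : HasFrobenius S F) :
    IsIrreducibleNS S ↔
      ∀ T : Set ℕ, IsNumericalSemigroup T → HasFrobenius T F → S ⊆ T → S = T := by
  constructor
  · rintro ⟨-, hirr⟩ T hT hTF hsub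
    by_contra hne
    apply hirr
    have hF0 : F ≠ 0 := fun h => hF.1 (h ▸ hS.1)
    refine ⟨T, S ∪ {F}, hT, ⟨?_, ?_, ?_⟩, hsub.ssubset_of_ne hne,
      ⟨Set.subset_union_left, ?_⟩, ?_⟩
    · exact Set.mem_union_left _ hS.1
    · rintro a (ha | ha) b (hb | hb)
      · exact Set.mem_union_left _ (hS.2.1 a ha b hb)
      · simp only [Set.mem_singleton_iff] at hb; subst hb
        rcases Nat.eq_zero_or_pos a with h0 | h0
        · subst h0; exact Set.mem_union_right _ (by simp)
        · exact Set.mem_union_left _ (hF.2 _ (by omega))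
      · simp only [Set.mem_singleton_iff] at ha; subst ha
        rcases Nat.eq_zero_or_pos b with h0 | h0
        · subst h0; exact Set.mem_union_right _ (by simp)
        · exact Set.mem_union_left _ (hF.2 _ (by omega))
      · simp only [Set.mem_singleton_iff] at ha hb; subst ha; subst hb
        exact Set.mem_union_left _ (hF.2 _ (by omega))
    · refine hS.2.2.subset ?_
      intro x hx
      simp only [Set.mem_compl_iff, Set.mem_union] at hx ⊢
      exact fun h => hx (Or.inl h)
    · intro hsup; exact hF.1 (hsup (Set.mem_union_right _ rfl))
    · ext x
      constructor
      · intro hx; exact ⟨hsub hx, Set.mem_union_left _ hx⟩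
      · rintro ⟨hxT, hx | hx⟩
        · exact hx
        · simp only [Set.mem_singleton_iff] at hx; subst hx
          exact absurd hxT hTF.1
  · intro hmax
    refine ⟨hS, ?_⟩
    rintro ⟨S₁, S₂, h1, h2, hs1, hs2, heq⟩
    by_cases hF1 : F ∈ S₁
    · have hF2 : F ∉ S₂ := fun h => hF.1 (heq ▸ ⟨hF1, h⟩)
      exact hs2.ne (hmax S₂ h2 ⟨hF2, fun x hx => hs2.1 (hF.2 x hx)⟩ hs2.1)
    · exact hs1.ne (hmax S₁ h1 ⟨hF1, fun x hx => hs1.1 (hF.2 x hx)⟩ hs1.1)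
end

section
/- Let S be a numerical semigroup with Frobenius number F ≥ 1 that is not irreducible, and let h = max{x ∈ ℕ \ S : F - x ∉ S and x ≠ F/2}. Then S ∪ {h} is a numerical semigroup with Frobenius number F. -/
theorem stmt8 (S : Set ℕ) (F h : ℕ) (hS : IsNumericalSemigroup S)
    (hF : HasFrobenius S F) (hF1 : 1 ≤ F) (hirr : ¬ IsIrreducibleNS S)
    (hmem : h ∉ S ∧ F - h ∉ S ∧ 2 * h ≠ F)
    (hmax : ∀ x : ℕ, x ∉ S → F - x ∉ S → 2 * x ≠ F → x ≤ h) :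
    IsNumericalSemigroup (S ∪ {h}) ∧ HasFrobenius (S ∪ {h}) F := by
  obtain ⟨h0, hadd, hfin⟩ := hS
  obtain ⟨hFS, hFgt⟩ := hF
  obtain ⟨hhS, hFhS, h2h⟩ := hmem
  -- h ≤ F
  have hhF : h ≤ F := by
    by_contra hc
    exact hhS (hFgt h (by omega))
  -- h ≠ F
  have hne : h ≠ F := by
    intro he
    apply hFhS
    simp [he]
    exact h0
  -- F - h ≤ h, hence 2h > F
  have hFh : F - h ≤ h := by
    apply hmax
    · exact hFhS
    · have : F - (F - h) = h := by omega
      rw [this]; exact hhS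
    · omega
  have h2hF : F < 2 * h := by omega
  -- key: h + s ∈ S for s ∈ S positive
  have key : ∀ s ∈ S, 0 < s → h + s ∈ S := by
    intro s hs hspos
    by_contra hc
    have h1 : h + s ≤ F := by
      by_contra hc2
      exact hc (hFgt _ (by omega))
    have h2 : h + s ≠ F := by
      intro he
      apply hFhS
      have : F - h = s := by omega
      rw [this]; exact hs
    have h3 : F - (h + s) ∉ S := by
      intro hmem'
      apply hFhS
      have : F - h = (F - (h + s)) + s := by omega
      rw [this]
      exact hadd _ hmem' _ hs
    have h4 : 2 * (h + s) ≠ F := by omega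
    have := hmax _ hc h3 h4
    omega
  have h2hS : h + h ∈ S := hFgt _ (by omega)
  refine ⟨⟨Or.inl h0, ?_, ?_⟩, ?_, ?_⟩
  · rintro a (ha | ha) b (hb | hb)
    · exact Or.inl (hadd a ha b hb)
    · simp only [Set.mem_singleton_iff] at hb
      subst hb
      rcases Nat.eq_zero_or_pos a with h0a | h0a
      · subst h0a; exact Or.inr (by simp)
      · exact Or.inl (by rw [add_comm] at *; exact key a ha h0a)
    · simp only [Set.mem_singleton_iff] at ha
      subst ha
      rcases Nat.eq_zero_or_pos b with h0b | h0b
      · subst h0b; exact Or.inr (by simp)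
      · exact Or.inl (key b hb h0b)
    · simp only [Set.mem_singleton_iff] at ha hb
      subst ha; subst hb
      exact Or.inl h2hS
  · exact hfin.subset (by intro x hx; simp at hx ⊢; exact hx.2)
  · rintro (hFmem | hFmem)
    · exact hFS hFmem
    · exact hne hFmem.symm
  · intro x hx
    exact Or.inl (hFgt x hx)
end

section
/- A numerical semigroup S with Frobenius number F ≥ 1 is irreducible if and only if the set {x ∈ ℕ \ S : F - x ∉ S and x ≠ F/2} is empty. -/
theorem stmt9 (S : Set ℕ) (F : ℕ) (hS : IsNumericalSemigroup S)
    (hF : HasFrobenius S F) (hF1 : 1 ≤ F) :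
    IsIrreducibleNS S ↔ {x : ℕ | x ∉ S ∧ F - x ∉ S ∧ 2 * x ≠ F} = ∅ := by
  obtain ⟨h0, hadd, hcof⟩ := hS
  constructor
  · rintro ⟨-, hirr⟩
    by_contra hne
    obtain ⟨x0, hx0⟩ := Set.nonempty_iff_ne_empty.mpr hne
    set C := {x : ℕ | x ∉ S ∧ F - x ∉ S ∧ 2 * x ≠ F} with hC
    have hbdd : BddAbove C := ⟨F, fun y hy => by
      by_contra h; push_neg at h; exact hy.1 (hF.2 y h)⟩
    have hxC : sSup C ∈ C := Nat.sSup_mem ⟨x0, hx0⟩ hbdd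
    set x := sSup C with hxdef
    obtain ⟨hxS, hxFS, hx2⟩ := hxC
    have hxleF : x ≤ F := by by_contra h; push_neg at h; exact hxS (hF.2 x h)
    have hxneF : x ≠ F := fun h => hxFS (by rw [h, Nat.sub_self]; exact h0)
    have hFxC : F - x ∈ C := ⟨hxFS, by rwa [Nat.sub_sub_self hxleF], by omega⟩
    have hFxle : F - x ≤ x := le_csSup hbdd hFxC
    have h2x : F < 2 * x := by omega
    have hxpos : 0 < x := by
      rcases Nat.eq_zero_or_pos x with h | h
      · exact absurd (h ▸ h0) hxS
      · exact h
    -- key closure fact for S ∪ {x}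
    have hkey : ∀ a ∈ S, 0 < a → a + x ∈ S := by
      intro a ha hapos
      by_contra hax
      have haxF : a + x ≤ F := by
        by_contra h; push_neg at h; exact hax (hF.2 _ h)
      have hnotC : a + x ∉ C := fun hmem => by
        have := le_csSup hbdd hmem; omega
      have h2ax : 2 * (a + x) ≠ F := by omega
      have hFax : F - (a + x) ∈ S := by
        by_contra h
        exact hnotC ⟨hax, h, h2ax⟩
      have : a + (F - (a + x)) ∈ S := hadd a ha _ hFax
      have heq : a + (F - (a + x)) = F - x := by omega
      exact hxFS (heq ▸ this)
    refine hirr ⟨S ∪ {x}, S ∪ {F}, ?_, ?_, ?_, ?_, ?_⟩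
    · refine ⟨Or.inl h0, ?_, Set.Finite.subset hcof (Set.compl_subset_compl.mpr Set.subset_union_left)⟩
      rintro a (ha | ha) b (hb | hb)
      · exact Or.inl (hadd a ha b hb)
      · simp only [Set.mem_singleton_iff] at hb; subst hb
        rcases Nat.eq_zero_or_pos a with h | h
        · subst h; exact Or.inr (by simp)
        · exact Or.inl (hkey a ha h)
      · simp only [Set.mem_singleton_iff] at ha; subst ha
        rcases Nat.eq_zero_or_pos b with h | h
        · subst h; simp
        · exact Or.inl (by rw [add_comm]; exact hkey b hb h)
      · simp only [Set.mem_singleton_iff] at ha hb; subst ha; subst hb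
        exact Or.inl (hF.2 _ (by omega))
    · refine ⟨Or.inl h0, ?_, Set.Finite.subset hcof (Set.compl_subset_compl.mpr Set.subset_union_left)⟩
      rintro a (ha | ha) b (hb | hb)
      · exact Or.inl (hadd a ha b hb)
      · simp only [Set.mem_singleton_iff] at hb; subst hb
        rcases Nat.eq_zero_or_pos a with h | h
        · subst h; exact Or.inr (by simp)
        · exact Or.inl (hF.2 _ (by omega))
      · simp only [Set.mem_singleton_iff] at ha; subst ha
        rcases Nat.eq_zero_or_pos b with h | h
        · subst h; simp
        · exact Or.inl (hF.2 _ (by omega))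
      · simp only [Set.mem_singleton_iff] at ha hb; subst ha; subst hb
        exact Or.inl (hF.2 _ (by omega))
    · exact ⟨Set.subset_union_left, fun h => hxS (h (Or.inr rfl))⟩
    · exact ⟨Set.subset_union_left, fun h => hF.1 (h (Or.inr rfl))⟩
    · ext y
      constructor
      · intro hy; exact ⟨Or.inl hy, Or.inl hy⟩
      · rintro ⟨hy1 | hy1, hy2 | hy2⟩
        · exact hy1
        · exact hy1
        · exact hy2
        · simp only [Set.mem_singleton_iff] at hy1 hy2
          exact absurd (hy1.symm.trans hy2) hxneF
  · intro hempty
    refine ⟨⟨h0, hadd, hcof⟩, ?_⟩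
    rintro ⟨S₁, S₂, hS₁, hS₂, hsub1, hsub2, heq⟩
    have key : ∀ T : Set ℕ, IsNumericalSemigroup T → S ⊂ T → F ∈ T := by
      intro T hT hsub
      obtain ⟨t, htT, htS⟩ := Set.exists_of_ssubset hsub
      have htle : t ≤ F := by
        by_contra h; push_neg at h; exact htS (hF.2 t h)
      have : ¬ (t ∉ S ∧ F - t ∉ S ∧ 2 * t ≠ F) := by
        intro h
        have : t ∈ ({x : ℕ | x ∉ S ∧ F - x ∉ S ∧ 2 * x ≠ F} : Set ℕ) := h
        rw [hempty] at this
        exact this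
      push_neg at this
      rcases Classical.em (F - t ∈ S) with h | h
      · have : t + (F - t) ∈ T := hT.2.1 t htT _ (hsub.1 h)
        rwa [Nat.add_sub_cancel' htle] at this
      · have h2t : 2 * t = F := this htS h
        have : t + t ∈ T := hT.2.1 t htT t htT
        rwa [show t + t = F by omega] at this
    exact hF.1 (heq ▸ ⟨key S₁ hS₁ hsub1, key S₂ hS₂ hsub2⟩)
end

section
/- Let S be a numerical semigroup with Frobenius number F ≥ 1. Then S ∪ {x ∈ ℕ \ S : F - x ∉ S and x > F/2} is an irreducible numerical semigroup with Frobenius number F. -/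
theorem stmt10 (S : Set ℕ) (F : ℕ) (hS : IsNumericalSemigroup S)
    (hF : HasFrobenius S F) (hF1 : 1 ≤ F) :
    IsIrreducibleNS (S ∪ {x : ℕ | x ∉ S ∧ F - x ∉ S ∧ 2 * x > F}) ∧
      HasFrobenius (S ∪ {x : ℕ | x ∉ S ∧ F - x ∉ S ∧ 2 * x > F}) F := by
  obtain ⟨h0, hadd, hfin⟩ := hS
  obtain ⟨hFnS, hFgt⟩ := hF
  set T := S ∪ {x : ℕ | x ∉ S ∧ F - x ∉ S ∧ 2 * x > F} with hT
  have hST : S ⊆ T := Set.subset_union_left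
  -- T is closed under addition
  have hTadd : ∀ a ∈ T, ∀ b ∈ T, a + b ∈ T := by
    intro a ha b hb
    rcases ha with ha | ⟨haS, haF, ha2⟩
    · rcases hb with hb | ⟨hbS, hbF, hb2⟩
      · exact Or.inl (hadd a ha b hb)
      · by_cases hab : a + b ∈ S
        · exact Or.inl hab
        · refine Or.inr ⟨hab, ?_, by omega⟩
          intro hc
          have hle : a + b ≤ F := by
            by_contra h
            exact hab (hFgt _ (by omega))
          have h2 := hadd _ hc a ha
          have e : F - (a + b) + a = F - b := by omega
          rw [e] at h2
          exact hbF h2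
    · rcases hb with hb | ⟨hbS, hbF, hb2⟩
      · by_cases hab : a + b ∈ S
        · exact Or.inl hab
        · refine Or.inr ⟨hab, ?_, by omega⟩
          intro hc
          have hle : a + b ≤ F := by
            by_contra h
            exact hab (hFgt _ (by omega))
          have h2 := hadd _ hc b hb
          have e : F - (a + b) + b = F - a := by omega
          rw [e] at h2
          exact haF h2
      · exact Or.inl (hFgt _ (by omega))
  have hTns : IsNumericalSemigroup T :=
    ⟨Or.inl h0, hTadd, hfin.subset (Set.compl_subset_compl.mpr hST)⟩
  -- F ∉ T
  have hFT : F ∉ T := by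
    rintro (h | ⟨_, h2, _⟩)
    · exact hFnS h
    · simp at h2
      exact h2 h0
  have hFrob : HasFrobenius T F := ⟨hFT, fun x hx => Or.inl (hFgt x hx)⟩
  -- maximality: any NS containing T and missing F equals T
  have key : ∀ T₁ : Set ℕ, IsNumericalSemigroup T₁ → T ⊆ T₁ → F ∉ T₁ → T₁ ⊆ T := by
    rintro T₁ ⟨h10, h1add, _⟩ hsub hF1n x hx
    by_contra hxT
    have hxS : x ∉ S := fun h => hxT (Or.inl h)
    have hxle : x ≤ F := by
      by_contra h
      exact hxT (Or.inl (hFgt x (by omega)))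
    have hxne : x ≠ F := fun h => hF1n (h ▸ hx)
    by_cases hFx : F - x ∈ S
    · have hmem : x + (F - x) ∈ T₁ := h1add x hx _ (hsub (Or.inl hFx))
      have e : x + (F - x) = F := by omega
      exact hF1n (e ▸ hmem)
    · by_cases h2 : F < 2 * x
      · exact hxT (Or.inr ⟨hxS, hFx, h2⟩)
      · rcases eq_or_lt_of_le (show 2 * x ≤ F by omega) with heq | hlt
        · have hmem : x + x ∈ T₁ := h1add x hx x hx
          have e : x + x = F := by omega
          exact hF1n (e ▸ hmem)
        · have hFxT : F - x ∈ T := by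
            refine Or.inr ⟨hFx, ?_, by omega⟩
            have e : F - (F - x) = x := by omega
            rw [e]; exact hxS
          have hmem : x + (F - x) ∈ T₁ := h1add x hx _ (hsub hFxT)
          have e : x + (F - x) = F := by omega
          exact hF1n (e ▸ hmem)
  refine ⟨⟨hTns, ?_⟩, hFrob⟩
  rintro ⟨S₁, S₂, h1, h2, ⟨sub1, ne1⟩, ⟨sub2, ne2⟩, heq⟩
  have hFi : F ∉ S₁ ∨ F ∉ S₂ := by
    by_contra h
    push_neg at h
    exact hFT (heq ▸ (Set.mem_inter h.1 h.2))
  rcases hFi with h | h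
  · exact ne1 (key S₁ h1 sub1 h)
  · exact ne2 (key S₂ h2 sub2 h)
end

section
/- Let m ≥ 3 and F > 2m with m ∤ F, and let S be a numerical semigroup with multiplicity m and Frobenius number F. Then U = S ∪ {x ∈ ℕ \ S : F - x ∉ S and x > F/2} is the unique irreducible numerical semigroup with multiplicity m, Frobenius number F, and satisfying {s ∈ U : m < s < F/2} = {s ∈ S : m < s < F/2}. -/
/-- A numerical semigroup with Frobenius number `F` satisfying the
symmetry-type condition is irreducible. -/
lemma irr_of_sym (U : Set ℕ) (F : ℕ) (hU : IsNumericalSemigroup U)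
    (hFr : HasFrobenius U F)
    (hsym : ∀ x, x ∉ U → x < F → 2 * x ≠ F → F - x ∈ U) :
    IsIrreducibleNS U := by
  refine ⟨hU, ?_⟩
  rintro ⟨S₁, S₂, h1, h2, hs1, hs2, heq⟩
  have claim : ∀ V : Set ℕ, IsNumericalSemigroup V → U ⊆ V → F ∉ V → V ⊆ U := by
    intro V hV hUV hFV y hyV
    by_contra hyU
    have hyF : y < F := by
      rcases lt_trichotomy y F with h | h | h
      · exact h
      · exact absurd (h ▸ hyV) hFV
      · exact absurd (hFr.2 y h) hyU
    have h2y : 2 * y ≠ F := by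
      intro h
      have hv := hV.2.1 y hyV y hyV
      exact hFV (by rwa [show y + y = F by omega] at hv)
    have hmem := hsym y hyU hyF h2y
    have hv := hV.2.1 y hyV _ (hUV hmem)
    exact hFV (by rwa [show y + (F - y) = F by omega] at hv)
  have hFU : F ∉ U := hFr.1
  have : F ∉ S₁ ∨ F ∉ S₂ := by
    by_contra h
    push_neg at h
    exact hFU (heq ▸ Set.mem_inter h.1 h.2)
  rcases this with h | h
  · exact hs1.2 (claim S₁ h1 hs1.1 h)
  · exact hs2.2 (claim S₂ h2 hs2.1 h)

/-- An irreducible numerical semigroup with Frobenius number `F` satisfies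
the symmetry-type condition. -/
lemma sym_of_irr (T : Set ℕ) (F : ℕ) (hT : IsIrreducibleNS T)
    (hFr : HasFrobenius T F) :
    ∀ x, x < F → F < 2 * x → F - x ∉ T → x ∈ T := by
  obtain ⟨hTN, hTirr⟩ := hT
  have key : ∀ k, ∀ x, F - x ≤ k → x < F → F < 2 * x → F - x ∉ T → x ∈ T := by
    intro k
    induction k with
    | zero => intro x hk hxF; omega
    | succ k ih =>
      intro x hk hxF h2x hgap
      by_contra hx
      -- T₁ = T ∪ {x} is a numerical semigroup
      have step : ∀ a ∈ T, a + x ∈ insert x T := by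
        intro a haT
        rcases Nat.eq_zero_or_pos a with rfl | hapos
        · simp [Set.mem_insert_iff]
          
        rcases lt_trichotomy (a + x) F with hlt | heqF | hgt
        · by_cases hmem : a + x ∈ T
          · exact Set.mem_insert_of_mem _ hmem
          · refine Set.mem_insert_of_mem _ (ih (a + x) (by omega) (by omega) (by omega) ?_)
            intro hc
            have := hTN.2.1 _ hc a haT
            exact hgap (by rwa [show F - (a + x) + a = F - x by omega] at this)
        · exfalso
          exact hgap (by rwa [show F - x = a by omega])
        · exact Set.mem_insert_of_mem _ (hFr.2 _ hgt)
      have hT1 : IsNumericalSemigroup (insert x T) := by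
        refine ⟨Set.mem_insert_of_mem _ hTN.1, ?_, ?_⟩
        · intro a ha b hb
          rcases Set.mem_insert_iff.mp ha with rfl | haT
          · rcases Set.mem_insert_iff.mp hb with rfl | hbT
            · exact Set.mem_insert_of_mem _ (hFr.2 _ (by omega))
            · rw [add_comm]; exact step _ hbT
          · rcases Set.mem_insert_iff.mp hb with rfl | hbT
            · exact step _ haT
            · exact Set.mem_insert_of_mem _ (hTN.2.1 _ haT _ hbT)
        · exact hTN.2.2.subset (Set.compl_subset_compl.mpr (Set.subset_insert _ _))
      have hT2 : IsNumericalSemigroup (insert F T) := by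
        refine ⟨Set.mem_insert_of_mem _ hTN.1, ?_, ?_⟩
        · intro a ha b hb
          have hstep : ∀ a ∈ T, a + F ∈ insert F T := by
            intro a haT
            rcases Nat.eq_zero_or_pos a with rfl | hapos
            · simp [Set.mem_insert_iff]
            · exact Set.mem_insert_of_mem _ (hFr.2 _ (by omega))
          rcases Set.mem_insert_iff.mp ha with rfl | haT
          · rcases Set.mem_insert_iff.mp hb with rfl | hbT
            · exact Set.mem_insert_of_mem _ (hFr.2 _ (by omega))
            · rw [add_comm]; exact hstep _ hbT
          · rcases Set.mem_insert_iff.mp hb with rfl | hbT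
            · exact hstep _ haT
            · exact Set.mem_insert_of_mem _ (hTN.2.1 _ haT _ hbT)
        · exact hTN.2.2.subset (Set.compl_subset_compl.mpr (Set.subset_insert _ _))
      refine hTirr ⟨insert x T, insert F T, hT1, hT2, ?_, ?_, ?_⟩
      · exact ⟨Set.subset_insert _ _, fun h => hx (h (Set.mem_insert x T))⟩
      · exact ⟨Set.subset_insert _ _, fun h => hFr.1 (h (Set.mem_insert F T))⟩
      · ext y
        constructor
        · intro hy
          exact Set.mem_inter (Set.mem_insert_of_mem _ hy) (Set.mem_insert_of_mem _ hy)
        · rintro ⟨hy1, hy2⟩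
          rcases Set.mem_insert_iff.mp hy1 with rfl | hyT
          · rcases Set.mem_insert_iff.mp hy2 with h | hyT
            · omega
            · exact hyT
          · exact hyT
  intro x hxF h2x hgap
  exact key (F - x) x le_rfl hxF h2x hgap

theorem stmt11 (m F : ℕ) (hm : 3 ≤ m) (hF : 2 * m < F) (hdvd : ¬ m ∣ F)
    (S : Set ℕ) (hS : IsNumericalSemigroup S) (hmS : HasMultiplicity S m)
    (hFS : HasFrobenius S F) :
    ∀ U : Set ℕ, U = S ∪ {x : ℕ | x ∉ S ∧ F - x ∉ S ∧ 2 * x > F} →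
      (IsIrreducibleNS U ∧ HasMultiplicity U m ∧ HasFrobenius U F ∧
        {s ∈ U | m < s ∧ 2 * s < F} = {s ∈ S | m < s ∧ 2 * s < F}) ∧
      ∀ T : Set ℕ, IsIrreducibleNS T → HasMultiplicity T m → HasFrobenius T F →
        {s ∈ T | m < s ∧ 2 * s < F} = {s ∈ S | m < s ∧ 2 * s < F} → T = U := by
  intro U hUdef
  have hmemU : ∀ x : ℕ, x ∈ U ↔ x ∈ S ∨ (x ∉ S ∧ F - x ∉ S ∧ 2 * x > F) := by
    intro x; rw [hUdef]; simp [Set.mem_union, Set.mem_setOf_eq]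
  -- U is a numerical semigroup
  have hUNS : IsNumericalSemigroup U := by
    refine ⟨(hmemU 0).mpr (Or.inl hS.1), ?_, ?_⟩
    · have helper : ∀ a ∈ S, ∀ x : ℕ, x ∉ S → F - x ∉ S → 2 * x > F → a + x ∈ U := by
        intro a haS x hx hFx h2x
        rcases Nat.eq_zero_or_pos a with rfl | hapos
        · exact (hmemU _).mpr (Or.inr (by simpa using ⟨hx, hFx, h2x⟩))
        rcases lt_trichotomy (a + x) F with hlt | heqF | hgt
        · by_cases hmem : a + x ∈ S
          · exact (hmemU _).mpr (Or.inl hmem)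
          · refine (hmemU _).mpr (Or.inr ⟨hmem, ?_, by omega⟩)
            intro hc
            have := hS.2.1 _ hc a haS
            exact hFx (by rwa [show F - (a + x) + a = F - x by omega] at this)
        · exact absurd (by rwa [show F - x = a by omega]) hFx
        · exact (hmemU _).mpr (Or.inl (hFS.2 _ hgt))
      intro a ha b hb
      rcases (hmemU a).mp ha with haS | ⟨haS, haF, ha2⟩
      · rcases (hmemU b).mp hb with hbS | ⟨hbS, hbF, hb2⟩
        · exact (hmemU _).mpr (Or.inl (hS.2.1 a haS b hbS))
        · exact helper a haS b hbS hbF hb2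
      · rcases (hmemU b).mp hb with hbS | ⟨hbS, hbF, hb2⟩
        · rw [add_comm]; exact helper b hbS a haS haF ha2
        · exact (hmemU _).mpr (Or.inl (hFS.2 _ (by omega)))
    · refine hS.2.2.subset ?_
      intro x hx
      simp only [Set.mem_compl_iff] at hx ⊢
      intro hxS
      exact hx ((hmemU x).mpr (Or.inl hxS))
  have hFU : F ∉ U := by
    rw [hmemU]
    push_neg
    refine ⟨hFS.1, fun _ => ?_⟩
    simp only [Nat.sub_self]
    exact fun h => absurd hS.1 h
  have hUF : HasFrobenius U F :=
    ⟨hFU, fun x hx => (hmemU x).mpr (Or.inl (hFS.2 x hx))⟩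
  have hUm : HasMultiplicity U m := by
    refine ⟨(hmemU m).mpr (Or.inl hmS.1), hmS.2.1, ?_⟩
    intro s hs hspos
    rcases (hmemU s).mp hs with hsS | ⟨_, _, h2s⟩
    · exact hmS.2.2 s hsS hspos
    · omega
  have hUsym : ∀ x, x ∉ U → x < F → 2 * x ≠ F → F - x ∈ U := by
    intro x hxU hxF h2x
    rw [hmemU] at hxU
    push_neg at hxU
    obtain ⟨hxS, hxor⟩ := hxU
    by_cases hFxS : F - x ∈ S
    · exact (hmemU _).mpr (Or.inl hFxS)
    · have h2 : 2 * x < F := by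
        have := hxor hxS hFxS
        omega
      refine (hmemU _).mpr (Or.inr ⟨hFxS, ?_, by omega⟩)
      rwa [show F - (F - x) = x by omega]
  have hUirr : IsIrreducibleNS U := irr_of_sym U F hUNS hUF hUsym
  have hUsmall : {s ∈ U | m < s ∧ 2 * s < F} = {s ∈ S | m < s ∧ 2 * s < F} := by
    ext s
    simp only [Set.mem_setOf_eq]
    constructor
    · rintro ⟨hsU, hms, h2s⟩
      rcases (hmemU s).mp hsU with hsS | ⟨_, _, h⟩
      · exact ⟨hsS, hms, h2s⟩
      · omega
    · rintro ⟨hsS, hms, h2s⟩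
      exact ⟨(hmemU s).mpr (Or.inl hsS), hms, h2s⟩
  refine ⟨⟨hUirr, hUm, hUF, hUsmall⟩, ?_⟩
  intro T hTirr hTm hTF hTsmall
  have hsymT := sym_of_irr T F hTirr hTF
  have hTN := hTirr.1
  -- below F/2, T and S agree
  have hlow : ∀ x : ℕ, 2 * x ≤ F → (x ∈ T ↔ x ∈ S) := by
    intro x h2x
    rcases Nat.eq_zero_or_pos x with rfl | hxpos
    · exact ⟨fun _ => hS.1, fun _ => hTN.1⟩
    by_cases hxm : x < m
    · constructor
      · intro h; exact absurd (hTm.2.2 x h hxpos) (by omega)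
      · intro h; exact absurd (hmS.2.2 x h hxpos) (by omega)
    by_cases hxm' : x = m
    · subst hxm'; exact ⟨fun _ => hmS.1, fun _ => hTm.1⟩
    have hmx : m < x := by omega
    by_cases h2 : 2 * x = F
    · constructor
      · intro h
        have := hTN.2.1 x h x h
        exact absurd (by rwa [show x + x = F by omega] at this) hTF.1
      · intro h
        have := hS.2.1 x h x h
        exact absurd (by rwa [show x + x = F by omega] at this) hFS.1
    · have h2' : 2 * x < F := by omega
      have := Set.ext_iff.mp hTsmall x
      simp only [Set.mem_setOf_eq] at this
      constructor
      · intro h; exact (this.mp ⟨h, hmx, h2'⟩).1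
      · intro h; exact (this.mpr ⟨h, hmx, h2'⟩).1
  ext x
  rcases le_or_gt (2 * x) F with h2x | h2x
  · rw [hlow x h2x, hmemU]
    constructor
    · exact Or.inl
    · rintro (h | ⟨_, _, h⟩)
      · exact h
      · omega
  · rcases lt_trichotomy x F with hxF | rfl | hxF
    · have hsub : 2 * (F - x) ≤ F := by omega
      have hFx := hlow (F - x) hsub
      by_cases hFxS : F - x ∈ S
      · constructor
        · intro hxT
          have := hTN.2.1 x hxT (F - x) (hFx.mpr hFxS)
          exact absurd (by rwa [show x + (F - x) = F by omega] at this) hTF.1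
        · intro hxU
          rcases (hmemU x).mp hxU with hxS | ⟨_, h, _⟩
          · have := hS.2.1 x hxS (F - x) hFxS
            exact absurd (by rwa [show x + (F - x) = F by omega] at this) hFS.1
          · exact absurd hFxS h
      · constructor
        · intro _
          by_cases hxS : x ∈ S
          · exact (hmemU x).mpr (Or.inl hxS)
          · exact (hmemU x).mpr (Or.inr ⟨hxS, hFxS, h2x⟩)
        · intro _
          exact hsymT x hxF h2x (fun h => hFxS (hFx.mp h))
    · exact ⟨fun h => absurd h hTF.1, fun h => absurd h hFU⟩
    · exact ⟨fun _ => (hmemU x).mpr (Or.inl (hFS.2 x hxF)), fun _ => hTF.2 x hxF⟩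
end

section
/- A numerical semigroup S is irreducible if and only if its genus equals ⌈(F(S)+1)/2⌉. -/
theorem stmt12 (S : Set ℕ) (F : ℕ) (hS : IsNumericalSemigroup S)
    (hF : HasFrobenius S F) :
    IsIrreducibleNS S ↔ (Sᶜ.ncard : ℤ) = ⌈((F : ℚ) + 1) / 2⌉ := by
  classical
  obtain ⟨h0, hadd, hfin⟩ := hS
  obtain ⟨hFS, hFgt⟩ := hF
  -- every non-element is ≤ F
  have hle : ∀ x : ℕ, x ∉ S → x ≤ F := by
    intro x hx
    by_contra h
    exact hx (hFgt x (by omega))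
  -- pairing: if x ∈ S and x ≤ F then F - x ∉ S
  have hpair : ∀ x : ℕ, x ∈ S → x ≤ F → F - x ∉ S := by
    intro x hx hxF hFx
    have := hadd x hx (F - x) hFx
    rw [show x + (F - x) = F by omega] at this
    exact hFS this
  set n := F + 1 with hn
  set G : Finset ℕ := (Finset.range n).filter (fun x => x ∉ S) with hG
  set G' : Finset ℕ := (Finset.range n).filter (fun x => x ∈ S) with hG'
  have hmemG : ∀ x, x ∈ G ↔ x ∉ S := by
    intro x
    simp only [hG, Finset.mem_filter, Finset.mem_range]
    constructor
    · exact fun h => h.2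
    · exact fun h => ⟨by have := hle x h; omega, h⟩
  have hmemG' : ∀ x, x ∈ G' ↔ (x ∈ S ∧ x ≤ F) := by
    intro x
    simp only [hG', Finset.mem_filter, Finset.mem_range]
    constructor
    · exact fun h => ⟨h.2, by omega⟩
    · exact fun h => ⟨by omega, h.1⟩
  have hsum : G'.card + G.card = n := by
    rw [hG, hG']
    rw [Finset.card_filter_add_card_filter_not (p := fun x => x ∈ S)]
    exact Finset.card_range n
  -- lower bound: always 2 * #G ≥ F + 1
  have hinj : G'.card ≤ G.card := by
    apply Finset.card_le_card_of_injOn (fun x => F - x)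
    · intro x hx
      rw [Finset.mem_coe, hmemG'] at hx
      rw [Finset.mem_coe, hmemG]
      exact hpair x hx.1 hx.2
    · intro x hx y hy hxy
      rw [Finset.mem_coe, hmemG'] at hx hy
      simp only at hxy
      omega
  -- upper bound under symmetry condition A
  have hupper : (∀ x, x ∉ S → (F - x ∈ S ∨ 2 * x = F)) → G.card ≤ F / 2 + 1 := by
    intro hA
    have hcle := Finset.card_le_card_of_injOn (s := G) (t := Finset.range (F / 2 + 1))
      (fun x => min x (F - x)) ?_ ?_
    · simpa using hcle
    · intro x hx
      rw [Finset.mem_coe, hmemG] at hx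
      have := hle x hx
      simp only [Finset.mem_coe, Finset.mem_range]
      omega
    · intro x hx y hy hxy
      rw [Finset.mem_coe, hmemG] at hx hy
      simp only at hxy
      have hxF := hle x hx
      have hyF := hle y hy
      by_contra hne
      have hyx : y = F - x := by omega
      rcases hA x hx with h | h
      · rw [← hyx] at h; exact hy h
      · omega
  -- strict bound when A fails
  have hstrict : (∃ x, x ∉ S ∧ F - x ∉ S ∧ 2 * x ≠ F) → F + 3 ≤ 2 * G.card := by
    rintro ⟨x₀, hx₀, hFx₀, h2x₀⟩
    have hx₀F := hle x₀ hx₀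
    have hx₀G : x₀ ∈ G := (hmemG x₀).2 hx₀
    have hFx₀G : F - x₀ ∈ G := (hmemG _).2 hFx₀
    have hne : F - x₀ ≠ x₀ := by omega
    have hmem1 : F - x₀ ∈ G.erase x₀ := Finset.mem_erase.2 ⟨hne, hFx₀G⟩
    have hcard1 : (G.erase x₀).card = G.card - 1 := Finset.card_erase_of_mem hx₀G
    have hcard2 : ((G.erase x₀).erase (F - x₀)).card = (G.erase x₀).card - 1 :=
      Finset.card_erase_of_mem hmem1
    have hpos : 1 ≤ (G.erase x₀).card := Finset.card_pos.2 ⟨_, hmem1⟩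
    have hinj2 : G'.card ≤ ((G.erase x₀).erase (F - x₀)).card := by
      apply Finset.card_le_card_of_injOn (fun x => F - x)
      · intro x hx
        rw [Finset.mem_coe, hmemG'] at hx
        refine Finset.mem_erase.2 ⟨?_, Finset.mem_erase.2 ⟨?_, (hmemG _).2 (hpair x hx.1 hx.2)⟩⟩
        · intro he2
          apply hx₀
          rw [show x₀ = x by simp only at he2; omega]
          exact hx.1
        · intro he2
          apply hFx₀
          rw [show F - x₀ = x by simp only at he2; omega]
          exact hx.1
      · intro x hx y hy hxy
        rw [Finset.mem_coe, hmemG'] at hx hy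
        simp only at hxy
        omega
    omega
  -- characterization of the cardinality
  have hkey : G.card = F / 2 + 1 ↔ (∀ x, x ∉ S → (F - x ∈ S ∨ 2 * x = F)) := by
    constructor
    · intro hc
      by_contra hA
      push_neg at hA
      obtain ⟨x, hx, h1, h2⟩ := hA
      have := hstrict ⟨x, hx, h1, h2⟩
      omega
    · intro hA
      have h1 := hupper hA
      have h2 : F + 1 ≤ 2 * G.card := by omega
      omega
  -- rewrite the RHS of the statement
  have hcompl : Sᶜ = ↑G := by
    ext x
    rw [Set.mem_compl_iff, Finset.mem_coe, hmemG]
  have hncard : Sᶜ.ncard = G.card := by rw [hcompl, Set.ncard_coe_finset]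
  obtain ⟨k, hk⟩ : ∃ k, F = 2 * k ∨ F = 2 * k + 1 := ⟨F / 2, by omega⟩
  have hF2 : F / 2 = k := by omega
  have hceil : ⌈((F : ℚ) + 1) / 2⌉ = (k : ℤ) + 1 := by
    rw [Int.ceil_eq_iff]
    rcases hk with hk | hk <;> subst hk <;> push_cast <;> constructor <;> linarith
  have hrhs : ((Sᶜ.ncard : ℤ) = ⌈((F : ℚ) + 1) / 2⌉) ↔ G.card = F / 2 + 1 := by
    rw [hncard, hceil, hF2]
    constructor <;> intro h <;> omega
  rw [hrhs, hkey]
  -- main equivalence: irreducible ↔ A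
  constructor
  · -- irreducible → A
    intro hirr
    by_contra hA
    push_neg at hA
    obtain ⟨x₀, hx₀, hFx₀, h2x₀⟩ := hA
    have hx₀F := hle x₀ hx₀
    -- set of "bad" gaps
    set B : Finset ℕ := G.filter (fun x => F - x ∉ S ∧ 2 * x ≠ F) with hB
    have hmemB : ∀ x, x ∈ B ↔ (x ∉ S ∧ F - x ∉ S ∧ 2 * x ≠ F) := by
      intro x
      rw [hB, Finset.mem_filter, hmemG x]
    have hx₀B : x₀ ∈ B := (hmemB x₀).2 ⟨hx₀, hFx₀, h2x₀⟩
    have hBne : B.Nonempty := ⟨x₀, hx₀B⟩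
    set h := B.max' hBne with hh
    have hhB := B.max'_mem hBne
    rw [hmemB, ← hh] at hhB
    obtain ⟨hhS, hFhS, h2h⟩ := hhB
    have hhF := hle h hhS
    have hmax : ∀ y, y ∉ S → F - y ∉ S → 2 * y ≠ F → y ≤ h :=
      fun y h1 h2 h3 => B.le_max' y ((hmemB y).2 ⟨h1, h2, h3⟩)
    -- the reflected witness is also bad, so h > F/2
    have hFx₀B : F - x₀ ≤ h := by
      apply hmax
      · exact hFx₀
      · rw [show F - (F - x₀) = x₀ by omega]; exact hx₀
      · omega
    have hx₀h : x₀ ≤ h := hmax x₀ hx₀ hFx₀ h2x₀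
    have hhalf : F < 2 * h := by omega
    have hhne : h ≠ F := by
      intro he
      apply hFhS
      rw [he, Nat.sub_self]
      exact h0
    -- S ∪ {h} is closed under adding positive elements of S
    have hSh : ∀ s ∈ S, 0 < s → s + h ∈ S := by
      intro s hs hspos
      by_contra hsh
      have hshF := hle _ hsh
      have hFsh : F - (s + h) ∉ S := by
        intro hmem
        have := hadd s hs _ hmem
        rw [show s + (F - (s + h)) = F - h by omega] at this
        exact hFhS this
      have := hmax _ hsh hFsh (by omega)
      omega
    have hTns : IsNumericalSemigroup (S ∪ {h}) := by
      refine ⟨Or.inl h0, ?_, ?_⟩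
      · rintro a (ha | ha) b (hb | hb)
        · exact Or.inl (hadd a ha b hb)
        · simp only [Set.mem_singleton_iff] at hb
          subst hb
          rcases Nat.eq_zero_or_pos a with h' | h'
          · subst h'; right; simp
          · exact Or.inl (hSh a ha h')
        · simp only [Set.mem_singleton_iff] at ha
          subst ha
          rcases Nat.eq_zero_or_pos b with h' | h'
          · subst h'; right; simp
          · exact Or.inl (by rw [Nat.add_comm]; exact hSh b hb h')
        · simp only [Set.mem_singleton_iff] at ha hb
          exact Or.inl (hFgt _ (by omega))
      · exact hfin.subset (Set.compl_subset_compl.2 Set.subset_union_left)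
    have hT2ns : IsNumericalSemigroup (S ∪ {F}) := by
      refine ⟨Or.inl h0, ?_, ?_⟩
      · rintro a (ha | ha) b (hb | hb)
        · exact Or.inl (hadd a ha b hb)
        · simp only [Set.mem_singleton_iff] at hb
          subst hb
          rcases Nat.eq_zero_or_pos a with h' | h'
          · subst h'; right; simp
          · exact Or.inl (hFgt _ (by omega))
        · simp only [Set.mem_singleton_iff] at ha
          subst ha
          rcases Nat.eq_zero_or_pos b with h' | h'
          · subst h'; right; simp
          · exact Or.inl (hFgt _ (by omega))
        · simp only [Set.mem_singleton_iff] at ha hb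
          have hFpos : 0 < F := Nat.pos_of_ne_zero (fun h' => hFS (h' ▸ h0))
          exact Or.inl (hFgt _ (by omega))
      · exact hfin.subset (Set.compl_subset_compl.2 Set.subset_union_left)
    apply hirr.2
    refine ⟨S ∪ {h}, S ∪ {F}, hTns, hT2ns, ?_, ?_, ?_⟩
    · refine Set.subset_union_left.ssubset_of_ne ?_
      intro he
      apply hhS
      rw [he]
      exact Or.inr rfl
    · refine Set.subset_union_left.ssubset_of_ne ?_
      intro he
      apply hFS
      rw [he]
      exact Or.inr rfl
    · ext x
      simp only [Set.mem_inter_iff, Set.mem_union, Set.mem_singleton_iff]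
      constructor
      · exact fun hx => ⟨Or.inl hx, Or.inl hx⟩
      · rintro ⟨hx | rfl, hy | hy⟩
        · exact hx
        · exact hx
        · exact hy
        · exact absurd hy hhne
  · -- A → irreducible
    intro hA
    refine ⟨⟨h0, hadd, hfin⟩, ?_⟩
    rintro ⟨S₁, S₂, hS₁, hS₂, hsub₁, hsub₂, heq⟩
    have key : ∀ T : Set ℕ, IsNumericalSemigroup T → S ⊂ T → F ∈ T := by
      rintro T ⟨T0, Tadd, Tfin⟩ hsub
      obtain ⟨x, hxT, hxS⟩ := Set.exists_of_ssubset hsub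
      rcases hA x hxS with h | h
      · have hxF := hle x hxS
        have := Tadd x hxT (F - x) (hsub.1 h)
        rwa [show x + (F - x) = F by omega] at this
      · have := Tadd x hxT x hxT
        rwa [show x + x = F by omega] at this
    have h1 := key S₁ hS₁ hsub₁
    have h2 := key S₂ hS₂ hsub₂
    apply hFS
    rw [heq]
    exact ⟨h1, h2⟩
end

section
/- Let F be odd, F ≥ 3, and let m satisfy 3 ≤ m ≤ (F+2)/2 with m ∤ F. Let r with 1 ≤ r ≤ m be congruent to (F+1)/2 modulo m. Then the submonoid generated by {m} ∪ {(F+1)/2 + x : x ∈ {0,...,m-1} \ {m-r, r-1}} is a symmetric (irreducible) numerical semigroup with multiplicity m, Frobenius number F, and its ratio exceeds F/2. -/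
theorem stmt14 (m F r : ℕ) (hodd : Odd F) (hF : 3 ≤ F) (hm : 3 ≤ m)
    (hm2 : 2 * m ≤ F + 2) (hdvd : ¬ m ∣ F)
    (hr1 : 1 ≤ r) (hr2 : r ≤ m) (hrc : (F + 1) / 2 ≡ r [MOD m]) :
    ∀ S : Set ℕ,
      S = ↑(AddSubmonoid.closure
        ({m} ∪ (fun x => (F + 1) / 2 + x) '' ({x : ℕ | x < m} \ {m - r, r - 1}))) →
      IsNumericalSemigroup S ∧ HasMultiplicity S m ∧ HasFrobenius S F ∧
        IsIrreducibleNS S ∧ (∀ x : ℕ, x ∉ S → F - x ∈ S) ∧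
        ∀ ρ : ℕ, ρ ∈ S → ¬ m ∣ ρ → (∀ s ∈ S, ¬ m ∣ s → ρ ≤ s) → 2 * ρ > F := by
  intro S hS
  obtain ⟨t, ht⟩ := hodd
  set c := (F + 1) / 2 with hcdef
  have h2c : F + 1 = 2 * c := by omega
  have hmc : m ≤ c := by omega
  have hcF : c ≤ F := by omega
  have hm0 : 0 < m := by omega
  set G : Set ℕ :=
    {m} ∪ (fun x => c + x) '' ({x : ℕ | x < m} \ {m - r, r - 1}) with hGdef
  -- residue of generators
  have hgen : ∀ x : ℕ, x < m → x ≠ r - 1 → ¬ (c + x ≡ F [MOD m]) := by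
    intro x hx hxr h
    have h1 : c + (x + 1) ≡ c + c [MOD m] := by
      have h2 := h.add_right 1
      have e1 : c + (x + 1) = c + x + 1 := by omega
      have e2 : c + c = F + 1 := by omega
      rw [e1, e2]; exact h2
    have h3 : x + 1 ≡ r [MOD m] := (Nat.ModEq.add_left_cancel' c h1).trans hrc
    have h4 : x ≡ r - 1 [MOD m] := by
      have h5 : x + 1 ≡ (r - 1) + 1 [MOD m] := by
        rwa [Nat.sub_add_cancel hr1]
      exact Nat.ModEq.add_right_cancel' 1 h5
    exact hxr (Nat.ModEq.eq_of_lt_of_lt h4 hx (by omega))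
  -- decomposition of elements ≥ c with good residues
  have hres : ∀ n, c ≤ n → ¬ m ∣ n → ¬ n ≡ F [MOD m] →
      ∃ x k, x < m ∧ x ≠ m - r ∧ x ≠ r - 1 ∧ n = (c + x) + m * k := by
    intro n hcn hnd hnF
    have hmod : c + (n - c) % m ≡ n [MOD m] := by
      have h := (Nat.mod_modEq (n - c) m).add_left c
      rwa [Nat.add_sub_cancel' hcn] at h
    refine ⟨(n - c) % m, (n - c) / m, Nat.mod_lt _ hm0, ?_, ?_, ?_⟩
    · intro hx
      apply hnd
      rw [hx] at hmod
      have h1 : c + (m - r) ≡ r + (m - r) [MOD m] := hrc.add_right _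
      have h2 : r + (m - r) = m := by omega
      have h3 : n ≡ m [MOD m] := by
        have h3' := hmod.symm.trans h1
        rwa [h2] at h3'
      have h4 : (m : ℕ) ≡ 0 [MOD m] := Nat.modEq_zero_iff_dvd.mpr dvd_rfl
      exact Nat.modEq_zero_iff_dvd.mp (h3.trans h4)
    · intro hx
      apply hnF
      rw [hx] at hmod
      have h1 : c + (r - 1) + 1 ≡ F + 1 [MOD m] := by
        have e1 : c + (r - 1) + 1 = c + r := by omega
        have e2 : (F + 1) = c + c := by omega
        rw [e1, e2]
        exact (hrc.add_left c).symm
      have h2 : c + (r - 1) ≡ F [MOD m] := Nat.ModEq.add_right_cancel' 1 h1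
      exact hmod.symm.trans h2
    · have h := Nat.div_add_mod (n - c) m
      omega
  -- the pair (a, b) for F + m
  have hab : ∃ a b, a < m ∧ b < m ∧ a ≠ m - r ∧ a ≠ r - 1 ∧ b ≠ m - r ∧ b ≠ r - 1 ∧
      (c + a) + (c + b) = F + m := by
    obtain ⟨a, ha3, ha1, ha2⟩ : ∃ a, a < 3 ∧ a ≠ m - r ∧ a ≠ r - 1 := by
      refine ⟨if m - r = 0 ∨ r - 1 = 0 then
        (if m - r = 1 ∨ r - 1 = 1 then 2 else 1) else 0, ?_, ?_, ?_⟩ <;>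
        split_ifs <;> omega
    exact ⟨a, m - 1 - a, by omega, by omega, ha1, ha2, by omega, by omega, by omega⟩
  -- membership of generators in the closure
  have hmem_m : m ∈ AddSubmonoid.closure G :=
    AddSubmonoid.subset_closure (Set.mem_union_left _ rfl)
  have hmul : ∀ k : ℕ, m * k ∈ AddSubmonoid.closure G := by
    intro k
    have h := AddSubmonoid.nsmul_mem (AddSubmonoid.closure G) hmem_m k
    rwa [nsmul_eq_mul, mul_comm] at h
  have hgenmem : ∀ x, x < m → x ≠ m - r → x ≠ r - 1 → c + x ∈ AddSubmonoid.closure G := by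
    intro x h1 h2 h3
    exact AddSubmonoid.subset_closure (Set.mem_union_right _ ⟨x, ⟨h1, by simp [h2, h3]⟩, rfl⟩)
  -- the predicate
  set P : ℕ → Prop := fun n => m ∣ n ∨ (c ≤ n ∧ ¬ n ≡ F [MOD m]) ∨ F < n with hPdef
  have hPadd : ∀ a b : ℕ, P a → P b → P (a + b) := by
    intro a b ha hb
    rcases ha with ha | ha | ha
    · rcases hb with hb | hb | hb
      · exact Or.inl (dvd_add ha hb)
      · refine Or.inr (Or.inl ⟨by omega, fun h => hb.2 ?_⟩)
        have h1 : a ≡ 0 [MOD m] := Nat.modEq_zero_iff_dvd.mpr ha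
        have h2 : b ≡ a + b [MOD m] := by
          have := (h1.add_right b).symm
          simpa using this
        exact h2.trans h
      · exact Or.inr (Or.inr (by omega))
    · rcases hb with hb | hb | hb
      · refine Or.inr (Or.inl ⟨by omega, fun h => ha.2 ?_⟩)
        have h1 : b ≡ 0 [MOD m] := Nat.modEq_zero_iff_dvd.mpr hb
        have h2 : a ≡ a + b [MOD m] := by
          have := (h1.add_left a).symm
          simpa using this
        exact h2.trans h
      · exact Or.inr (Or.inr (by omega))
      · exact Or.inr (Or.inr (by omega))
    · exact Or.inr (Or.inr (by omega))
  -- closure ⊆ P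
  have hSP : ∀ n ∈ AddSubmonoid.closure G, P n := by
    have hT : AddSubmonoid.closure G ≤
        { carrier := {n | P n}
          add_mem' := fun {a b} ha hb => hPadd a b ha hb
          zero_mem' := Or.inl (dvd_zero m) } := by
      rw [AddSubmonoid.closure_le]
      rintro g (hg | ⟨x, ⟨hx1, hx2⟩, rfl⟩)
      · rcases hg with rfl
        exact Or.inl dvd_rfl
      · have hx3 : x ≠ r - 1 := by
          intro h; exact hx2 (by simp [h])
        exact Or.inr (Or.inl ⟨Nat.le_add_right c x, hgen x hx1 hx3⟩)
    exact fun n hn => hT hn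
  -- P ⊆ closure
  have hPS : ∀ n : ℕ, P n → n ∈ AddSubmonoid.closure G := by
    intro n hn
    by_cases hd : m ∣ n
    · obtain ⟨k, hk⟩ := hd
      exact hk ▸ hmul k
    by_cases hF' : n ≡ F [MOD m]
    · have hFn : F < n := by
        rcases hn with h | h | h
        · exact absurd h hd
        · exact absurd hF' h.2
        · exact h
      have hd2 : m ∣ n - F := (Nat.modEq_iff_dvd' hFn.le).mp hF'.symm
      obtain ⟨k, hk⟩ := hd2
      have hk0 : k ≠ 0 := by rintro rfl; simp at hk; omega
      obtain ⟨k', rfl⟩ : ∃ k', k = k' + 1 := ⟨k - 1, by omega⟩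
      obtain ⟨a, b, ha1, hb1, ha2, ha3, hb2, hb3, hab'⟩ := hab
      have hn' : n = ((c + a) + (c + b)) + m * k' := by
        calc n = F + (n - F) := by omega
        _ = F + m * (k' + 1) := by rw [hk]
        _ = ((c + a) + (c + b)) + m * k' := by rw [hab', Nat.mul_succ]; ring
      rw [hn']
      exact AddSubmonoid.add_mem _
        (AddSubmonoid.add_mem _ (hgenmem a ha1 ha2 ha3) (hgenmem b hb1 hb2 hb3)) (hmul k')
    · have hcn : c ≤ n := by
        rcases hn with h | h | h
        · exact absurd h hd
        · exact h.1
        · omega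
      obtain ⟨x, k, hx1, hx2, hx3, hn'⟩ := hres n hcn hd hF'
      rw [hn']
      exact AddSubmonoid.add_mem _ (hgenmem x hx1 hx2 hx3) (hmul k)
  subst hS
  have hmemP : ∀ n : ℕ, n ∈ (AddSubmonoid.closure G : Set ℕ) ↔ P n :=
    fun n => ⟨fun h => hSP n h, fun h => hPS n h⟩
  -- the semigroup structure
  have hNS : IsNumericalSemigroup (AddSubmonoid.closure G : Set ℕ) := by
    refine ⟨AddSubmonoid.zero_mem _, fun a ha b hb => AddSubmonoid.add_mem _ ha hb, ?_⟩
    apply Set.Finite.subset (Set.finite_Iic F)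
    intro n hn
    simp only [Set.mem_compl_iff] at hn
    by_contra h
    exact hn (hPS n (Or.inr (Or.inr (by simpa using h))))
  have hFnot : F ∉ (AddSubmonoid.closure G : Set ℕ) := by
    intro h
    rcases hSP F h with h | h | h
    · exact hdvd h
    · exact h.2 (Nat.ModEq.refl F)
    · omega
  -- symmetry
  have hsym : ∀ x : ℕ, x ∉ (AddSubmonoid.closure G : Set ℕ) →
      F - x ∈ (AddSubmonoid.closure G : Set ℕ) := by
    intro x hx
    have hxF : x ≤ F := by
      by_contra h
      exact hx (hPS x (Or.inr (Or.inr (by omega))))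
    have hnd : ¬ m ∣ x := fun h => hx (hPS x (Or.inl h))
    by_cases hxFm : x ≡ F [MOD m]
    · exact hPS _ (Or.inl ((Nat.modEq_iff_dvd' hxF).mp hxFm))
    · have hxc : x < c := by
        by_contra h
        exact hx (hPS x (Or.inr (Or.inl ⟨by omega, hxFm⟩)))
      apply hPS
      refine Or.inr (Or.inl ⟨by omega, fun h => hnd ?_⟩)
      have h1 : m ∣ F - (F - x) := (Nat.modEq_iff_dvd' (Nat.sub_le F x)).mp h
      rwa [show F - (F - x) = x from by omega] at h1
  refine ⟨hNS, ⟨hPS m (Or.inl dvd_rfl), hm0, ?_⟩, ⟨hFnot, ?_⟩, ⟨hNS, ?_⟩, hsym, ?_⟩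
  · -- multiplicity minimality
    intro s hs hspos
    rcases hSP s hs with h | h | h
    · exact Nat.le_of_dvd hspos h
    · omega
    · omega
  · -- Frobenius: everything above F
    intro x hx
    exact hPS x (Or.inr (Or.inr hx))
  · -- irreducibility
    rintro ⟨S₁, S₂, hN1, hN2, ⟨hsub1, hne1⟩, ⟨hsub2, hne2⟩, heq⟩
    have key : ∀ (S' : Set ℕ), IsNumericalSemigroup S' →
        (AddSubmonoid.closure G : Set ℕ) ⊆ S' →
        ¬ S' ⊆ (AddSubmonoid.closure G : Set ℕ) → F ∈ S' := by
      intro S' hN hsub hne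
      obtain ⟨x, hx1, hx2⟩ := Set.not_subset.mp hne
      have hxF : x ≤ F := by
        by_contra h
        exact hx2 (hPS x (Or.inr (Or.inr (by omega))))
      have hFx : F - x ∈ S' := hsub (hsym x hx2)
      have h := hN.2.1 x hx1 (F - x) hFx
      rwa [show x + (F - x) = F from by omega] at h
    have hF1 : F ∈ S₁ := key S₁ hN1 hsub1 hne1
    have hF2 : F ∈ S₂ := key S₂ hN2 hsub2 hne2
    exact hFnot (heq ▸ Set.mem_inter hF1 hF2)
  · -- ratio
    intro ρ hρ hnd _
    rcases hSP ρ hρ with h | h | h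
    · exact absurd h hnd
    · omega
    · omega
end

section
/- Let S be an irreducible numerical semigroup with Frobenius number F, and let x be a minimal generator of S with x < F, 2x - F ∉ S, 3x ≠ 2F and 4x ≠ 3F. Then (S \ {x}) ∪ {F - x} is an irreducible numerical semigroup with Frobenius number F. -/
/-- Adjoining a suitable element keeps being a numerical semigroup. -/
lemma NS_union_single (S : Set ℕ) (y : ℕ) (hNS : IsNumericalSemigroup S)
    (hcl : ∀ s ∈ S, 0 < s → y + s ∈ S) (h2y : y + y ∈ S ∪ {y}) :
    IsNumericalSemigroup (S ∪ {y}) := by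
  obtain ⟨h0, hadd, hfin⟩ := hNS
  refine ⟨Or.inl h0, ?_, ?_⟩
  · rintro a (ha | rfl) b (hb | rfl)
    · exact Or.inl (hadd a ha b hb)
    · rcases Nat.eq_zero_or_pos a with rfl | ha0
      · exact Or.inr (by simp)
      · exact Or.inl (by rw [Nat.add_comm]; exact hcl a ha ha0)
    · rcases Nat.eq_zero_or_pos b with rfl | hb0
      · exact Or.inr (by simp)
      · exact Or.inl (hcl b hb hb0)
    · exact h2y
  · exact hfin.subset (by intro z hz; simp only [Set.mem_compl_iff, Set.mem_union] at *; tauto)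

lemma irred_symm (S : Set ℕ) (F : ℕ) (hS : IsIrreducibleNS S) (hF : HasFrobenius S F) :
    ∀ y, y < F → y ∉ S → 2 * y ≠ F → F - y ∈ S := by
  obtain ⟨hNS, hirr⟩ := hS
  have hF0 : 0 < F := Nat.pos_of_ne_zero (fun h => hF.1 (h ▸ hNS.1))
  suffices H : ∀ d y, F - y ≤ d → y < F → y ∉ S → 2 * y ≠ F → F - y ∈ S by
    intro y; exact H (F - y) y le_rfl
  intro d
  induction d with
  | zero => intro y hd hyF; omega
  | succ d ih =>
    intro y hd hyF hyS h2y
    by_contra hFy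
    have hy0 : 0 < y := Nat.pos_of_ne_zero (fun h => hyS (h ▸ hNS.1))
    rcases lt_trichotomy (2 * y) F with hlt | heq | hgt
    · -- pass to the larger counterexample F - y
      have h' := ih (F - y) (by omega) (by omega) hFy (by omega)
      rw [Nat.sub_sub_self (le_of_lt hyF)] at h'
      exact hyS h'
    · exact h2y heq
    · -- y is a maximal counterexample; build two semigroups
      have hcl : ∀ s ∈ S, 0 < s → y + s ∈ S := by
        intro s hs hs0
        by_contra hys
        have hysF : y + s ≠ F := by
          intro h
          apply hFy
          have hseq : F - y = s := by omega
          rw [hseq]; exact hs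
        have h1 : y + s < F := by
          by_contra h
          exact hys (hF.2 _ (by omega))
        have h2 : F - (y + s) ∉ S := by
          intro hmem
          apply hFy
          have heq2 : (F - (y + s)) + s = F - y := by omega
          rw [← heq2]; exact hNS.2.1 _ hmem _ hs
        exact h2 (ih (y + s) (by omega) h1 hys (by omega))
      have hNS1 : IsNumericalSemigroup (S ∪ {y}) :=
        NS_union_single S y hNS hcl (Or.inl (hF.2 _ (by omega)))
      have hNS2 : IsNumericalSemigroup (S ∪ {F}) :=
        NS_union_single S F hNS (fun s hs hs0 => hF.2 _ (by omega))
          (Or.inl (hF.2 _ (by omega)))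
      apply hirr
      refine ⟨S ∪ {y}, S ∪ {F}, hNS1, hNS2, ?_, ?_, ?_⟩
      · exact ⟨Set.subset_union_left, fun h => hyS (h (Or.inr rfl))⟩
      · exact ⟨Set.subset_union_left, fun h => hF.1 (h (Or.inr rfl))⟩
      · ext z
        simp only [Set.mem_inter_iff, Set.mem_union, Set.mem_singleton_iff]
        constructor
        · intro hz; exact ⟨Or.inl hz, Or.inl hz⟩
        · rintro ⟨hz1 | rfl, hz2 | h2'⟩ <;> first | assumption | omega
  
lemma symm_irred (S : Set ℕ) (F : ℕ) (hNS : IsNumericalSemigroup S) (hF : HasFrobenius S F)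
    (hsym : ∀ y, y < F → y ∉ S → 2 * y ≠ F → F - y ∈ S) : IsIrreducibleNS S := by
  refine ⟨hNS, ?_⟩
  rintro ⟨S₁, S₂, h₁, h₂, hs₁, hs₂, heq⟩
  have key : ∀ T : Set ℕ, IsNumericalSemigroup T → S ⊂ T → F ∈ T := by
    intro T hT hST
    obtain ⟨y, hyT, hyS⟩ := Set.exists_of_ssubset hST
    have hyF : y ≤ F := by by_contra h; exact hyS (hF.2 y (by omega))
    have hy0 : 0 < y := Nat.pos_of_ne_zero (fun h => hyS (h ▸ hNS.1))
    rcases eq_or_lt_of_le hyF with rfl | hlt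
    · exact hyT
    rcases eq_or_ne (2 * y) F with h2 | h2
    · have hyy : F = y + y := by omega
      rw [hyy]; exact hT.2.1 y hyT y hyT
    · have hFy := hsym y hlt hyS h2
      have hyy : F = y + (F - y) := by omega
      rw [hyy]; exact hT.2.1 y hyT _ (hST.1 hFy)
  have hF1 := key S₁ h₁ hs₁
  have hF2 := key S₂ h₂ hs₂
  exact hF.1 (heq ▸ (⟨hF1, hF2⟩ : F ∈ S₁ ∩ S₂))

theorem stmt15 (S : Set ℕ) (F x : ℕ) (hS : IsIrreducibleNS S)
    (hF : HasFrobenius S F)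
    (hx : x ∈ S) (hmin : IsNumericalSemigroup (S \ {x}))
    (h1 : x < F) (h2 : (2 * x : ℤ) - F ∉ (Nat.cast '' S : Set ℤ))
    (h3 : 3 * x ≠ 2 * F) (h4 : 4 * x ≠ 3 * F) :
    IsIrreducibleNS ((S \ {x}) ∪ {F - x}) ∧
      HasFrobenius ((S \ {x}) ∪ {F - x}) F := by
  have hNS := hS.1
  have hx0 : 0 < x := by
    rcases Nat.eq_zero_or_pos x with rfl | h
    · exact absurd rfl hmin.1.2
    · exact h
  have h2' : ∀ a ∈ S, F ≤ 2 * x → 2 * x - F ≠ a := by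
    intro a ha hle hcontra
    exact h2 ⟨a, ha, by omega⟩
  have h2x : 2 * x ≠ F := by
    intro h
    exact h2' 0 hNS.1 (by omega) (by omega)
  have hsymS := irred_symm S F hS hF
  -- key closure fact
  have key : ∀ a ∈ S \ {x}, 0 < a → a + (F - x) ∈ S \ {x} := by
    rintro a ⟨haS, hax⟩ ha0
    simp only [Set.mem_singleton_iff] at hax
    have hmem : a + (F - x) ∈ S := by
      by_contra hgap
      have hne : a + (F - x) ≠ F := fun h => hax (by omega)
      have hlt : a + (F - x) < F := by
        by_contra h
        exact hgap (hF.2 _ (by omega))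
      have h2s : 2 * (a + (F - x)) ≠ F := by
        intro h
        exact h2' (a + a) (hNS.2.1 a haS a haS) (by omega) (by omega)
      have hxs := hsymS _ hlt hgap h2s
      have hval : F - (a + (F - x)) = x - a := by omega
      rw [hval] at hxs
      have halt : a < x := by omega
      have hxa : x - a ∈ S \ {x} := ⟨hxs, by simp; omega⟩
      have := hmin.2.1 _ hxa a ⟨haS, by simpa using hax⟩
      rw [Nat.sub_add_cancel (le_of_lt halt)] at this
      exact this.2 rfl
    refine ⟨hmem, ?_⟩
    simp only [Set.mem_singleton_iff]
    intro h
    exact h2' a haS (by omega) (by omega)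
  have key2 : (F - x) + (F - x) ∈ S \ {x} := by
    have hmem : (F - x) + (F - x) ∈ S := by
      by_contra hgap
      have hne : (F - x) + (F - x) ≠ F := fun h => h2x (by omega)
      have hlt : (F - x) + (F - x) < F := by
        by_contra h
        exact hgap (hF.2 _ (by omega))
      have h2s : 2 * ((F - x) + (F - x)) ≠ F := by
        intro h; exact h4 (by omega)
      have hxs := hsymS _ hlt hgap h2s
      have hval : F - ((F - x) + (F - x)) = 2 * x - F := by omega
      rw [hval] at hxs
      exact h2' _ hxs (by omega) rfl
    exact ⟨hmem, by simp only [Set.mem_singleton_iff]; intro h; exact h3 (by omega)⟩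
  have hNST : IsNumericalSemigroup ((S \ {x}) ∪ {F - x}) := by
    refine ⟨Or.inl hmin.1, ?_, ?_⟩
    · rintro a (ha | rfl) b (hb | rfl)
      · exact Or.inl (hmin.2.1 a ha b hb)
      · rcases Nat.eq_zero_or_pos a with rfl | ha0
        · exact Or.inr (by simp)
        · exact Or.inl (key a ha ha0)
      · rcases Nat.eq_zero_or_pos b with rfl | hb0
        · exact Or.inr (by simp)
        · exact Or.inl (by rw [Nat.add_comm]; exact key b hb hb0)
      · exact Or.inl key2
    · exact hmin.2.2.subset (by
        intro z hz
        simp only [Set.mem_compl_iff, Set.mem_union] at *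
        tauto)
  have hFT : HasFrobenius ((S \ {x}) ∪ {F - x}) F := by
    constructor
    · rintro (⟨hFS, _⟩ | hFx)
      · exact hF.1 hFS
      · simp only [Set.mem_singleton_iff] at hFx; omega
    · intro y hy
      exact Or.inl ⟨hF.2 y hy, by simp; omega⟩
  refine ⟨?_, hFT⟩
  refine symm_irred _ F hNST hFT ?_
  intro y hyF hyT h2y
  rcases eq_or_ne y x with rfl | hyx
  · exact Or.inr rfl
  · have hyS : y ∉ S := by
      intro h
      exact hyT (Or.inl ⟨h, by simpa using hyx⟩)
    have hFyx : y ≠ F - x := by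
      intro h
      exact hyT (Or.inr (by simpa using h))
    have hFy := hsymS y hyF hyS h2y
    exact Or.inl ⟨hFy, by simp only [Set.mem_singleton_iff]; omega⟩
end

section
/- Let S be an irreducible numerical semigroup whose ratio r(S) satisfies r(S) < F(S)/2. Then (S \ {r(S)}) ∪ {F(S) - r(S)} is an irreducible numerical semigroup with the same Frobenius number as S and ratio strictly greater than r(S). -/
/-- An irreducible numerical semigroup is maximal among semigroups avoiding F. -/
lemma ns_maximal {S : Set ℕ} {F : ℕ} (hS : IsIrreducibleNS S) (hF : HasFrobenius S F) :
    ∀ T : Set ℕ, IsNumericalSemigroup T → S ⊆ T → F ∉ T → T = S := by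
  obtain ⟨hNS, hirr⟩ := hS
  obtain ⟨h0, hcl, hcof⟩ := hNS
  obtain ⟨hFS, hFgt⟩ := hF
  intro T hT hST hFT
  by_contra hne
  have hfin : (T \ S).Finite := hcof.subset fun x hx => hx.2
  have hnon : (T \ S).Nonempty := by
    rcases Set.not_subset.mp (fun h => hne (le_antisymm h hST)) with ⟨x, hxT, hxS⟩
    exact ⟨x, hxT, hxS⟩
  obtain ⟨b, hb, hbmax'⟩ := hfin.exists_maximalFor id _ hnon
  simp only [id] at hbmax'
  have hbmax : ∀ a ∈ T \ S, a ≤ b := by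
    intro a ha
    by_contra hc
    have := hbmax' (j := a) ha (by omega)
    omega
  have hbT : b ∈ T := hb.1
  have hbS : b ∉ S := hb.2
  have hbF : b < F := by
    have h1 : b ≠ F := fun h => hFT (h ▸ hbT)
    have h2 : ¬ F < b := fun h => hbS (hFgt b h)
    omega
  have hbpos : 0 < b := Nat.pos_of_ne_zero (fun h => hbS (by rw [h]; exact h0))
  have hTS : ∀ x ∈ T, b < x → x ∈ S := by
    intro x hx hbx
    by_contra hxS
    exact absurd (hbmax x ⟨hx, hxS⟩) (by omega)
  have hS1 : IsNumericalSemigroup (insert b S) := by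
    refine ⟨Set.mem_insert_of_mem _ h0, ?_,
      hcof.subset fun x hx hxS => hx (Set.mem_insert_of_mem _ hxS)⟩
    rintro x (rfl | hx) y (rfl | hy)
    · exact Set.mem_insert_of_mem _ (hTS _ (hT.2.1 _ hbT _ hbT) (by omega))
    · rcases Nat.eq_zero_or_pos y with rfl | hy0
      · simpa using Set.mem_insert x S
      · exact Set.mem_insert_of_mem _ (hTS _ (hT.2.1 _ hbT _ (hST hy)) (by omega))
    · rcases Nat.eq_zero_or_pos x with rfl | hx0
      · simpa using Set.mem_insert y S
      · exact Set.mem_insert_of_mem _ (hTS _ (hT.2.1 _ (hST hx) _ hbT) (by omega))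
    · exact Set.mem_insert_of_mem _ (hcl _ hx _ hy)
  have hS2 : IsNumericalSemigroup (S ∪ {x | b < x}) := by
    refine ⟨Or.inl h0, ?_, hcof.subset fun x hx hxS => hx (Or.inl hxS)⟩
    rintro x (hx | hx) y (hy | hy)
    · exact Or.inl (hcl _ hx _ hy)
    · exact Or.inr (by simp only [Set.mem_setOf_eq] at hy ⊢; omega)
    · exact Or.inr (by simp only [Set.mem_setOf_eq] at hx ⊢; omega)
    · exact Or.inr (by simp only [Set.mem_setOf_eq] at hx hy ⊢; omega)
  refine hirr ⟨insert b S, S ∪ {x | b < x}, hS1, hS2, Set.ssubset_insert hbS, ?_, ?_⟩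
  · rw [Set.ssubset_def]
    refine ⟨Set.subset_union_left, fun hsub => hFS (hsub (Or.inr ?_))⟩
    simpa using hbF
  · ext x
    constructor
    · intro hx
      exact ⟨Set.mem_insert_of_mem _ hx, Or.inl hx⟩
    · rintro ⟨hx1, hx2⟩
      rcases hx1 with rfl | hx1
      · rcases hx2 with hx2 | hx2
        · exact hx2
        · simp only [Set.mem_setOf_eq] at hx2; omega
      · exact hx1

/-- An irreducible numerical semigroup is symmetric or pseudo-symmetric. -/
lemma ns_sym {S : Set ℕ} {F : ℕ} (hS : IsIrreducibleNS S) (hF : HasFrobenius S F) :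
    ∀ x, x ∉ S → x ≠ F → 2 * x ≠ F → F - x ∈ S := by
  have h0 : (0 : ℕ) ∈ S := hS.1.1
  have hcl := hS.1.2.1
  have hcof := hS.1.2.2
  obtain ⟨hFS, hFgt⟩ := hF
  by_contra hcon
  push_neg at hcon
  obtain ⟨x₀, hx₀S, hx₀F, hx₀2, hx₀⟩ := hcon
  have hAfin : {x | x ∉ S ∧ x ≠ F ∧ 2 * x ≠ F ∧ F - x ∉ S}.Finite :=
    hcof.subset fun x hx => hx.1
  have hAnon : {x | x ∉ S ∧ x ≠ F ∧ 2 * x ≠ F ∧ F - x ∉ S}.Nonempty :=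
    ⟨x₀, hx₀S, hx₀F, hx₀2, hx₀⟩
  obtain ⟨k, hh, hmax'⟩ := hAfin.exists_maximalFor id _ hAnon
  simp only [id] at hmax'
  have hmax : ∀ a, a ∉ S → a ≠ F → 2 * a ≠ F → F - a ∉ S → a ≤ k := by
    intro a h1 h2 h3 h4
    by_contra hc
    have := hmax' (j := a) ⟨h1, h2, h3, h4⟩ (by omega)
    omega
  obtain ⟨hhS, hhF, hh2, hhFS⟩ := hh
  have hkpos : 0 < k := Nat.pos_of_ne_zero (fun he => hhS (by rw [he]; exact h0))
  have hltF : ∀ y, y ∉ S → y ≤ F := by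
    intro y hy
    by_contra hc
    exact hy (hFgt y (by omega))
  have hhltF : k < F := lt_of_le_of_ne (hltF k hhS) hhF
  have h2F : F < 2 * k := by
    have h1 : F - k ≤ k := by
      refine hmax _ hhFS (by omega) (by omega) ?_
      rw [Nat.sub_sub_self (le_of_lt hhltF)]
      exact hhS
    omega
  have key : ∀ s ∈ S, 0 < s → k + s ∈ S := by
    intro s hs hspos
    by_contra hx
    have hxle : k + s ≤ F := hltF _ hx
    have hxF : k + s ≠ F := by
      intro he
      have he2 : F - k = s := by omega
      exact hhFS (he2 ▸ hs)
    have hle : k + s ≤ k := by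
      refine hmax _ hx hxF (by omega) ?_
      intro hFx
      have he : (F - (k + s)) + s = F - k := by omega
      exact hhFS (he ▸ hcl _ hFx _ hs)
    omega
  have hS1 : IsNumericalSemigroup (insert k S) := by
    refine ⟨Set.mem_insert_of_mem _ h0, ?_,
      hcof.subset fun x hx hxS => hx (Set.mem_insert_of_mem _ hxS)⟩
    rintro x (rfl | hx) y (rfl | hy)
    · exact Set.mem_insert_of_mem _ (hFgt _ (by omega))
    · rcases Nat.eq_zero_or_pos y with rfl | hy0
      · simpa using Set.mem_insert x S
      · exact Set.mem_insert_of_mem _ (key y hy hy0)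
    · rcases Nat.eq_zero_or_pos x with rfl | hx0
      · simpa using Set.mem_insert y S
      · rw [Nat.add_comm]
        exact Set.mem_insert_of_mem _ (key x hx hx0)
    · exact Set.mem_insert_of_mem _ (hcl _ hx _ hy)
  have heq : insert k S = S := by
    refine ns_maximal hS ⟨hFS, hFgt⟩ _ hS1 (Set.subset_insert _ _) ?_
    rintro (h1 | h1)
    · exact hhF h1.symm
    · exact hFS h1
  exact hhS (heq ▸ Set.mem_insert k S)

/-- A symmetric/pseudo-symmetric numerical semigroup is irreducible. -/
lemma sym_irred {T : Set ℕ} {F : ℕ} (hT : IsNumericalSemigroup T) (hF : HasFrobenius T F)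
    (hsym : ∀ x, x ∉ T → x ≠ F → 2 * x ≠ F → F - x ∈ T) : IsIrreducibleNS T := by
  refine ⟨hT, ?_⟩
  rintro ⟨T₁, T₂, h₁, h₂, hs₁, hs₂, heq⟩
  have hFT : F ∉ T := hF.1
  have aux : ∀ U : Set ℕ, IsNumericalSemigroup U → T ⊂ U → F ∉ U → False := by
    intro U hU hTU hFU
    obtain ⟨x, hxU, hxT⟩ := Set.exists_of_ssubset hTU
    have hxF : x ≠ F := fun he => hFU (he ▸ hxU)
    by_cases h2 : 2 * x = F
    · have hxx : x + x ∈ U := hU.2.1 x hxU x hxU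
      rw [show x + x = F by omega] at hxx
      exact hFU hxx
    · have hFx : F - x ∈ T := hsym x hxT hxF h2
      have hxle : x ≤ F := by
        by_contra hc
        exact hxT (hF.2 x (by omega))
      have hmem : x + (F - x) ∈ U := hU.2.1 x hxU _ (hTU.1 hFx)
      rw [Nat.add_sub_cancel' hxle] at hmem
      exact hFU hmem
  have hcase : F ∉ T₁ ∨ F ∉ T₂ := by
    by_contra hc
    push_neg at hc
    exact hFT (heq ▸ Set.mem_inter hc.1 hc.2)
  rcases hcase with h | h
  · exact aux T₁ h₁ hs₁ h
  · exact aux T₂ h₂ hs₂ h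

theorem stmt16 (S : Set ℕ) (F m r : ℕ) (hS : IsIrreducibleNS S)
    (hF : HasFrobenius S F) (hm : HasMultiplicity S m)
    (hr : r ∈ S ∧ ¬ m ∣ r ∧ ∀ s ∈ S, ¬ m ∣ s → r ≤ s)
    (hlt : 2 * r < F) :
    IsIrreducibleNS ((S \ {r}) ∪ {F - r}) ∧
      HasFrobenius ((S \ {r}) ∪ {F - r}) F ∧
      ∀ m' r' : ℕ, HasMultiplicity ((S \ {r}) ∪ {F - r}) m' →
        (r' ∈ (S \ {r}) ∪ {F - r} ∧ ¬ m' ∣ r' ∧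
          ∀ s ∈ (S \ {r}) ∪ {F - r}, ¬ m' ∣ s → r' ≤ s) →
        r < r' := by
  obtain ⟨hrS, hrm, hrmin⟩ := hr
  obtain ⟨hmS, hmpos, hmmin⟩ := hm
  have hFS : F ∉ S := hF.1
  have hFgt := hF.2
  have h0 : (0 : ℕ) ∈ S := hS.1.1
  have hcl := hS.1.2.1
  have hcof := hS.1.2.2
  have hsymS := ns_sym hS hF
  have hrpos : 0 < r := Nat.pos_of_ne_zero (fun h => hrm (h ▸ dvd_zero m))
  have hrF : r < F := by omega
  have hmemT : ∀ x, x ∈ (S \ {r}) ∪ {F - r} ↔ (x ∈ S ∧ x ≠ r) ∨ x = F - r := by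
    intro x
    simp only [Set.mem_union, Set.mem_diff, Set.mem_singleton_iff]
  have hmdvd : ∀ a ∈ S, 0 < a → a < r → m ∣ a := by
    intro a ha hpos hltr
    by_contra hd
    exact absurd (hrmin a ha hd) (by omega)
  have hmr : m < r := by
    have h1 : m ≤ r := hmmin r hrS hrpos
    have h2 : m ≠ r := fun h => hrm (h ▸ dvd_refl m)
    omega
  -- sum of two elements of S \ {r}
  have claim1 : ∀ a b : ℕ, a ∈ S → a ≠ r → b ∈ S → b ≠ r → a + b ∈ S ∧ a + b ≠ r := by
    intro a b ha har hb hbr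
    refine ⟨hcl _ ha _ hb, ?_⟩
    intro habs
    rcases Nat.eq_zero_or_pos a with rfl | hapos
    · exact hbr (by omega)
    rcases Nat.eq_zero_or_pos b with rfl | hbpos
    · exact har (by omega)
    have hda : m ∣ a := hmdvd a ha hapos (by omega)
    have hdb : m ∣ b := hmdvd b hb hbpos (by omega)
    exact hrm (habs ▸ dvd_add hda hdb)
  -- a + (F - r) stays in T
  have claim2 : ∀ a : ℕ, a ∈ S → a ≠ r → a + (F - r) ∈ (S \ {r}) ∪ {F - r} := by
    intro a ha har
    rcases Nat.eq_zero_or_pos a with rfl | hapos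
    · rw [hmemT]; right; omega
    rw [hmemT]
    left
    constructor
    · by_cases hbig : F < a + (F - r)
      · exact hFgt _ hbig
      · have hale : a < r := by omega
        by_contra hx
        have hxF : a + (F - r) ≠ F := by omega
        have hx2 : 2 * (a + (F - r)) ≠ F := by omega
        have hFx : F - (a + (F - r)) ∈ S := hsymS _ hx hxF hx2
        have he : F - (a + (F - r)) = r - a := by omega
        rw [he] at hFx
        have hd1 : m ∣ (r - a) := hmdvd _ hFx (by omega) (by omega)
        have hd2 : m ∣ a := hmdvd a ha hapos hale
        exact hrm (by have : r = a + (r - a) := by omega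
                      rw [this]; exact dvd_add hd2 hd1)
    · omega
  have hTns : IsNumericalSemigroup ((S \ {r}) ∪ {F - r}) := by
    refine ⟨?_, ?_, ?_⟩
    · rw [hmemT]; left; exact ⟨h0, by omega⟩
    · intro x hx y hy
      rw [hmemT] at hx hy
      rcases hx with ⟨hxS, hxr⟩ | rfl
      · rcases hy with ⟨hyS, hyr⟩ | rfl
        · rw [hmemT]; left; exact claim1 x y hxS hxr hyS hyr
        · exact claim2 x hxS hxr
      · rcases hy with ⟨hyS, hyr⟩ | rfl
        · rw [Nat.add_comm]; exact claim2 y hyS hyr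
        · rw [hmemT]; left; exact ⟨hFgt _ (by omega), by omega⟩
    · refine (hcof.union (Set.finite_singleton r)).subset ?_
      intro x hx
      rw [Set.mem_compl_iff, hmemT] at hx
      push_neg at hx
      by_cases hxS : x ∈ S
      · right
        have := hx.1 hxS
        simpa using this
      · exact Or.inl hxS
  have hTF : HasFrobenius ((S \ {r}) ∪ {F - r}) F := by
    constructor
    · rw [hmemT]
      rintro (⟨h1, -⟩ | h1)
      · exact hFS h1
      · omega
    · intro x hx
      rw [hmemT]
      left
      exact ⟨hFgt x hx, by omega⟩
  have hTsym : ∀ x, x ∉ (S \ {r}) ∪ {F - r} → x ≠ F → 2 * x ≠ F →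
      F - x ∈ (S \ {r}) ∪ {F - r} := by
    intro x hx hxF hx2
    rw [hmemT] at hx
    push_neg at hx
    rw [hmemT]
    by_cases hxS : x ∈ S
    · right
      rw [hx.1 hxS]
    · have hxle : x ≤ F := by
        by_contra hc
        exact hxS (hFgt x (by omega))
      have hFx : F - x ∈ S := hsymS x hxS hxF hx2
      left
      refine ⟨hFx, ?_⟩
      intro he
      exact hx.2 (by omega)
  refine ⟨sym_irred hTns hTF hTsym, hTF, ?_⟩
  intro m' r' hm' hr'
  obtain ⟨hm'T, hm'pos, hm'min⟩ := hm'
  obtain ⟨hr'T, hr'dvd, -⟩ := hr'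
  have hmT : m ∈ (S \ {r}) ∪ {F - r} := by
    rw [hmemT]; left; exact ⟨hmS, by omega⟩
  have hm'le : m' ≤ m := hm'min m hmT hmpos
  have hm'eq : m' = m := by
    rw [hmemT] at hm'T
    rcases hm'T with ⟨h1, -⟩ | h1
    · exact le_antisymm hm'le (hmmin m' h1 hm'pos)
    · omega
  rw [hm'eq] at hr'dvd
  rw [hmemT] at hr'T
  rcases hr'T with ⟨h1, h2⟩ | h1
  · have := hrmin r' h1 hr'dvd
    omega
  · omega
end

section
/- Let F ≥ 3, m ≤ (F+2)/2 and m ∤ F. If S is an irreducible numerical semigroup with multiplicity m and Frobenius number F, and (q₁,...,q_{m-1}) is its Kunz coordinate vector with respect to m, then q₁ + ... + q_{m-1} = ⌈(F+1)/2⌉. -/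
lemma ns_reflection (S : Set ℕ) (F : ℕ) (hS : IsIrreducibleNS S)
    (hFS : HasFrobenius S F) : ∀ x, x ∉ S → 2 * x ≠ F → F - x ∈ S := by
  classical
  obtain ⟨⟨hS0, hSadd, hSfin⟩, hirr⟩ := hS
  obtain ⟨hFnot, hFgt⟩ := hFS
  have hFpos : F ≠ 0 := fun h => hFnot (h ▸ hS0)
  by_contra hcon
  push_neg at hcon
  obtain ⟨x, hxS, hx2, hxF⟩ := hcon
  set H : Finset ℕ := (Finset.range (F+1)).filter
      (fun y => y ∉ S ∧ F - y ∉ S ∧ 2*y ≠ F) with hH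
  have hxle : x ≤ F := by
    by_contra h
    exact hxS (hFgt x (by omega))
  have hxH : x ∈ H := by
    simp only [hH, Finset.mem_filter, Finset.mem_range]
    exact ⟨by omega, hxS, hxF, hx2⟩
  have hne : H.Nonempty := ⟨x, hxH⟩
  set h := H.max' hne with hh
  have hhH : h ∈ H := H.max'_mem hne
  simp only [hH, Finset.mem_filter, Finset.mem_range] at hhH
  obtain ⟨hhle, hhS, hhFS, hh2⟩ := hhH
  have hhle' : h ≤ F := by omega
  -- F - h is also in H, so F - h ≤ h, so F < 2h
  have hFh : F - h ∈ H := by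
    simp only [hH, Finset.mem_filter, Finset.mem_range]
    refine ⟨by omega, hhFS, ?_, by omega⟩
    rwa [Nat.sub_sub_self hhle']
  have hFlt : F < 2 * h := by
    have := Finset.le_max' H _ hFh
    omega
  -- closure step
  have hstep : ∀ s ∈ S, 0 < s → h + s ∈ S := by
    intro s hs hspos
    by_contra hns
    have hle : h + s ≤ F := by
      by_contra h'
      exact hns (hFgt _ (by omega))
    by_cases hc : F - (h+s) ∈ S
    · have heq : F - h = (F - (h+s)) + s := by omega
      exact hhFS (heq ▸ hSadd _ hc _ hs)
    · have hmem : h + s ∈ H := by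
        simp only [hH, Finset.mem_filter, Finset.mem_range]
        exact ⟨by omega, hns, hc, by omega⟩
      have := Finset.le_max' H _ hmem
      omega
  have hhne : h ≠ F := by
    intro he
    apply hhFS
    rw [he, Nat.sub_self]
    exact hS0
  -- T1 = S ∪ {h}
  have hT1 : IsNumericalSemigroup (S ∪ {h}) := by
    refine ⟨Or.inl hS0, ?_, ?_⟩
    · rintro a (ha | ha) b (hb | hb)
      · exact Or.inl (hSadd _ ha _ hb)
      · simp only [Set.mem_singleton_iff] at hb
        subst hb
        rcases Nat.eq_zero_or_pos a with h0 | h0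
        · subst h0; exact Or.inr (by simp)
        · exact Or.inl (by rw [Nat.add_comm]; exact hstep a ha h0)
      · simp only [Set.mem_singleton_iff] at ha
        subst ha
        rcases Nat.eq_zero_or_pos b with h0 | h0
        · subst h0; exact Or.inr (by simp)
        · exact Or.inl (hstep b hb h0)
      · simp only [Set.mem_singleton_iff] at ha hb
        subst ha; subst hb
        exact Or.inl (hFgt _ (by omega))
    · exact hSfin.subset (fun y hy => by
        simp only [Set.mem_compl_iff, Set.mem_union] at hy ⊢
        tauto)
  -- T2 = S ∪ {F}
  have hT2 : IsNumericalSemigroup (S ∪ {F}) := by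
    refine ⟨Or.inl hS0, ?_, ?_⟩
    · rintro a (ha | ha) b (hb | hb)
      · exact Or.inl (hSadd _ ha _ hb)
      · simp only [Set.mem_singleton_iff] at hb
        subst hb
        rcases Nat.eq_zero_or_pos a with h0 | h0
        · subst h0; exact Or.inr (by simp)
        · exact Or.inl (hFgt _ (by omega))
      · simp only [Set.mem_singleton_iff] at ha
        subst ha
        rcases Nat.eq_zero_or_pos b with h0 | h0
        · subst h0; exact Or.inr (by simp)
        · exact Or.inl (hFgt _ (by omega))
      · simp only [Set.mem_singleton_iff] at ha hb
        subst ha; subst hb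
        exact Or.inl (hFgt _ (by omega))
    · exact hSfin.subset (fun y hy => by
        simp only [Set.mem_compl_iff, Set.mem_union] at hy ⊢
        tauto)
  apply hirr
  refine ⟨S ∪ {h}, S ∪ {F}, hT1, hT2, ?_, ?_, ?_⟩
  · exact ⟨Set.subset_union_left, fun hsub => hhS (hsub (Or.inr rfl))⟩
  · exact ⟨Set.subset_union_left, fun hsub => hFnot (hsub (Or.inr rfl))⟩
  · ext y
    simp only [Set.mem_inter_iff, Set.mem_union, Set.mem_singleton_iff]
    constructor
    · intro hy; exact ⟨Or.inl hy, Or.inl hy⟩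
    · rintro ⟨hy1 | hy1, hy2 | hy2⟩ <;> first | exact hy1 | exact hy2 | (exfalso; exact hhne (hy1 ▸ hy2 ▸ rfl))

theorem stmt18 (m F : ℕ) (hF : 3 ≤ F) (hm : 2 * m ≤ F + 2) (hdvd : ¬ m ∣ F)
    (S : Set ℕ) (hS : IsIrreducibleNS S) (hmS : HasMultiplicity S m)
    (hFS : HasFrobenius S F) (q : ℕ → ℕ)
    (hq : ∀ i, 1 ≤ i → i < m →
      (q i * m + i ∈ S ∧ ∀ s ∈ S, s % m = i → q i * m + i ≤ s)) :
    ((∑ i ∈ Finset.Ico 1 m, q i : ℕ) : ℤ) = ⌈((F : ℚ) + 1) / 2⌉ := by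
  classical
  have hrefl := ns_reflection S F hS hFS
  obtain ⟨⟨hS0, hSadd, hSfin⟩, _⟩ := hS
  obtain ⟨hmem, hmpos, hmin⟩ := hmS
  obtain ⟨hFnot, hFgt⟩ := hFS
  -- multiples of m are in S
  have hmul : ∀ k : ℕ, k * m ∈ S := by
    intro k
    induction k with
    | zero => simpa using hS0
    | succ n ih => simpa [Nat.succ_mul] using hSadd _ ih _ hmem
  set Gf : Finset ℕ := (Finset.range (F+1)).filter (fun y => y ∉ S) with hGfdef
  set Sf : Finset ℕ := (Finset.range (F+1)).filter (fun y => y ∈ S) with hSfdef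
  have hcards : Sf.card + Gf.card = F + 1 := by
    rw [hSfdef, hGfdef]
    simpa using Finset.card_filter_add_card_filter_not
      (s := Finset.range (F+1)) (p := fun y => y ∈ S)
  -- Gf equals disjoint union over residues
  have hGf : Gf = (Finset.Ico 1 m).biUnion
      (fun i => (Finset.range (q i)).image (fun j => j*m + i)) := by
    ext x
    simp only [hGfdef, Finset.mem_filter, Finset.mem_range, Finset.mem_biUnion,
      Finset.mem_Ico, Finset.mem_image]
    constructor
    · rintro ⟨hxF, hxS⟩
      have hi0 : x % m ≠ 0 := by
        intro h0
        apply hxS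
        have := hmul (x / m)
        rwa [Nat.div_mul_cancel (Nat.dvd_of_mod_eq_zero h0)] at this
      have him : x % m < m := Nat.mod_lt _ hmpos
      refine ⟨x % m, ⟨by omega, him⟩, x / m, ?_, ?_⟩
      · by_contra hge
        push_neg at hge
        apply hxS
        obtain ⟨k, hk⟩ : ∃ k, x / m = q (x % m) + k := ⟨x / m - q (x % m), by omega⟩
        have hdm : m * (x / m) + x % m = x := Nat.div_add_mod x m
        have hx : x = (q (x % m) * m + x % m) + k * m := by
          conv_lhs => rw [← hdm]
          rw [hk]; ring
        rw [hx]
        exact hSadd _ (hq (x % m) (by omega) him).1 _ (hmul k)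
      · rw [Nat.mul_comm]; exact Nat.div_add_mod x m
    · rintro ⟨i, ⟨hi1, him⟩, j, hj, rfl⟩
      have hji : (j*m+i) % m = i := by
        rw [Nat.add_comm, Nat.add_mul_mod_self_right, Nat.mod_eq_of_lt him]
      have hnot : j*m+i ∉ S := by
        intro hmem'
        have hle := (hq i hi1 him).2 _ hmem' hji
        have : q i ≤ j := Nat.le_of_mul_le_mul_right (by omega) hmpos
        omega
      refine ⟨?_, hnot⟩
      by_contra hgt
      exact hnot (hFgt _ (by omega))
  have hsum : Gf.card = ∑ i ∈ Finset.Ico 1 m, q i := by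
    rw [hGf, Finset.card_biUnion]
    · refine Finset.sum_congr rfl (fun i hi => ?_)
      rw [Finset.card_image_of_injective _ (fun a b hab => by
        have : a * m = b * m := by omega
        exact Nat.eq_of_mul_eq_mul_right hmpos this)]
      exact Finset.card_range _
    · intro i hi i' hi' hne
      simp only [Finset.coe_Ico, Set.mem_Ico] at hi hi'
      rw [Function.onFun, Finset.disjoint_left]
      rintro a ha ha'
      simp only [Finset.mem_image, Finset.mem_range] at ha ha'
      obtain ⟨j, _, rfl⟩ := ha
      obtain ⟨j', _, he⟩ := ha'
      apply hne
      have h1 : (j*m+i) % m = i := by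
        rw [Nat.add_comm, Nat.add_mul_mod_self_right, Nat.mod_eq_of_lt hi.2]
      have h2 : (j'*m+i') % m = i' := by
        rw [Nat.add_comm, Nat.add_mul_mod_self_right, Nat.mod_eq_of_lt hi'.2]
      rw [← h1, ← he, h2]
  -- reflection maps Sf into Gf
  have hrS : ∀ y ∈ Sf, F - y ∈ Gf := by
    intro y hy
    simp only [hSfdef, hGfdef, Finset.mem_filter, Finset.mem_range] at hy ⊢
    refine ⟨by omega, fun hc => ?_⟩
    apply hFnot
    have := hSadd _ hy.2 _ hc
    have he : y + (F - y) = F := by omega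
    rwa [he] at this
  have hinj : ∀ s : Finset ℕ, (∀ a ∈ s, a ≤ F) → Set.InjOn (fun y => F - y) s := by
    intro s hs a ha b hb hab
    have := hs a ha
    have := hs b hb
    simp only at hab
    omega
  have hGle : ∀ a ∈ Gf, a ≤ F := by
    intro a ha; simp only [hGfdef, Finset.mem_filter, Finset.mem_range] at ha; omega
  have hSle : ∀ a ∈ Sf, a ≤ F := by
    intro a ha; simp only [hSfdef, Finset.mem_filter, Finset.mem_range] at ha; omega
  -- main counting inequality
  have h2g : F + 1 ≤ 2 * Gf.card ∧ 2 * Gf.card ≤ F + 2 := by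
    rcases Nat.even_or_odd F with ⟨t, ht⟩ | hodd
    · -- F even, F = t + t
      have htG : t ∈ Gf := by
        simp only [hGfdef, Finset.mem_filter, Finset.mem_range]
        refine ⟨by omega, fun hc => hFnot ?_⟩
        have := hSadd _ hc _ hc
        rwa [← ht] at this
      have ha : Sf.card ≤ (Gf.erase t).card := by
        apply Finset.card_le_card_of_injOn (fun y => F - y)
        · intro y hy
          refine Finset.mem_erase.2 ⟨?_, hrS y hy⟩
          intro he
          have hyF := hSle y hy
          have : y = t := by simp only at he; omega
          simp only [hSfdef, Finset.mem_coe, Finset.mem_filter] at hy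
          have htS : t ∉ S := by
            simp only [hGfdef, Finset.mem_filter] at htG; exact htG.2
          exact htS (this ▸ hy.2)
        · exact hinj Sf hSle
      have hb : (Gf.erase t).card ≤ Sf.card := by
        apply Finset.card_le_card_of_injOn (fun y => F - y)
        · intro y hy
          obtain ⟨hyne, hyG⟩ := Finset.mem_erase.1 hy
          simp only [hGfdef, Finset.mem_filter, Finset.mem_range] at hyG
          have h2y : 2 * y ≠ F := by omega
          have := hrefl y hyG.2 h2y
          simp only [hSfdef, Finset.mem_coe, Finset.mem_filter, Finset.mem_range]
          exact ⟨by omega, this⟩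
        · exact hinj _ (fun a ha => hGle a (Finset.mem_of_mem_erase ha))
      have hce : (Gf.erase t).card = Gf.card - 1 := Finset.card_erase_of_mem htG
      have hpos : 1 ≤ Gf.card := Finset.card_pos.2 ⟨t, htG⟩
      omega
    · -- F odd
      have ha : Sf.card ≤ Gf.card := Finset.card_le_card_of_injOn _ hrS (hinj Sf hSle)
      have hb : Gf.card ≤ Sf.card := by
        apply Finset.card_le_card_of_injOn (fun y => F - y)
        · intro y hy
          simp only [hGfdef, Finset.mem_coe, Finset.mem_filter, Finset.mem_range] at hy
          have h2y : 2 * y ≠ F := by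
            intro he; exact (Nat.not_even_iff_odd.2 hodd) ⟨y, by omega⟩
          have := hrefl y hy.2 h2y
          simp only [hSfdef, Finset.mem_coe, Finset.mem_filter, Finset.mem_range]
          exact ⟨by omega, this⟩
        · exact hinj Gf hGle
      omega
  -- conclude
  rw [← hsum]
  obtain ⟨h1, h2⟩ := h2g
  symm
  rw [Int.ceil_eq_iff]
  constructor
  · push_cast
    have h2' : (2 : ℚ) * Gf.card ≤ F + 2 := by exact_mod_cast h2
    linarith
  · push_cast
    have h1' : (F : ℚ) + 1 ≤ 2 * Gf.card := by exact_mod_cast h1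
    linarith
end

section
/- Let m, g, F be positive integers with 2 ≤ m ≤ g and m ∤ F. There exists a numerical semigroup with multiplicity m, genus g, and Frobenius number F if and only if ⌈mg/(m-1)⌉ - 1 ≤ F ≤ 2g - 1. -/
section NSaux

lemma ns_gap_le {S : Set ℕ} {F : ℕ} (hFr : HasFrobenius S F) :
    ∀ y, y ∉ S → y ≤ F := by
  intro y hy
  by_contra h
  exact hy (hFr.2 y (by omega))

/-- Forward direction: the two numerical inequalities. -/
lemma fwd_aux (m g F : ℕ) (hm : 2 ≤ m) (S : Set ℕ)
    (hNS : IsNumericalSemigroup S) (hmul : HasMultiplicity S m)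
    (hcard : Sᶜ.ncard = g) (hFr : HasFrobenius S F) :
    F + 1 ≤ 2 * g ∧ m * g ≤ (m - 1) * (F + 1) := by
  classical
  obtain ⟨h0, hadd, hfin⟩ := hNS
  have hgap : ∀ y, y ∉ S → y ≤ F := ns_gap_le hFr
  set AF := (Finset.Icc 0 F).filter (fun x => x ∈ S) with hAF
  set GF := (Finset.Icc 0 F).filter (fun x => ¬ x ∈ S) with hGF
  have hGFc : Sᶜ = ↑GF := by
    ext x
    simp only [Set.mem_compl_iff, hGF, Finset.coe_filter, Finset.mem_Icc, Set.mem_setOf_eq]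
    constructor
    · intro hx; exact ⟨⟨Nat.zero_le x, hgap x hx⟩, hx⟩
    · tauto
  have hg : GF.card = g := by
    rw [hGFc, Set.ncard_coe_finset] at hcard; exact hcard
  have hsum : AF.card + GF.card = F + 1 := by
    rw [hAF, hGF, Finset.card_filter_add_card_filter_not]
    rw [Nat.card_Icc]
    omega
  have hA_le : AF.card ≤ GF.card := by
    apply Finset.card_le_card_of_injOn (fun x => F - x)
    · intro a ha
      simp only [hAF, Finset.mem_coe, Finset.mem_filter, Finset.mem_Icc] at ha
      simp only [hGF, Finset.mem_coe, Finset.mem_filter, Finset.mem_Icc]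
      refine ⟨⟨Nat.zero_le _, by omega⟩, fun hFa => ?_⟩
      have hmem := hadd a ha.2 (F - a) hFa
      have heq : a + (F - a) = F := by omega
      rw [heq] at hmem
      exact hFr.1 hmem
    · intro a ha b hb hab
      simp only [hAF, Finset.coe_filter, Set.mem_setOf_eq, Finset.mem_Icc] at ha hb
      simp only at hab
      omega
  refine ⟨by omega, ?_⟩
  have hsub : GF ⊆ AF.biUnion (fun s => Finset.Icc (s+1) (s+m-1)) := by
    intro x hx
    simp only [hGF, Finset.mem_filter, Finset.mem_Icc] at hx
    obtain ⟨⟨_, hxF⟩, hxS⟩ := hx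
    set s := Nat.findGreatest (fun y => y ∈ S) x with hs
    have hsS : s ∈ S := Nat.findGreatest_spec (Nat.zero_le x) h0
    have hsx : s ≤ x := Nat.findGreatest_le x
    have hne : s ≠ x := fun h => hxS (h ▸ hsS)
    have hup : x < s + m := by
      by_contra hc
      push_neg at hc
      have hmem : s + m ∈ S := hadd s hsS m hmul.1
      exact (Nat.findGreatest_is_greatest (P := fun y => y ∈ S) (n := x) (by omega) (by omega)) hmem
    rw [Finset.mem_biUnion]
    refine ⟨s, ?_, ?_⟩
    · simp only [hAF, Finset.mem_filter, Finset.mem_Icc]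
      exact ⟨⟨Nat.zero_le _, le_trans hsx hxF⟩, hsS⟩
    · rw [Finset.mem_Icc]; omega
  have hcb := Finset.card_le_card hsub
  have hbu := Finset.card_biUnion_le (s := AF) (t := fun s => Finset.Icc (s+1) (s+m-1))
  have hconst : ∀ s ∈ AF, (Finset.Icc (s+1) (s+m-1)).card = m - 1 := by
    intro s _; rw [Nat.card_Icc]; omega
  rw [Finset.sum_congr rfl hconst, Finset.sum_const, smul_eq_mul] at hbu
  have h1 : g ≤ AF.card * (m - 1) := by
    calc g = GF.card := hg.symm
    _ ≤ _ := hcb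
    _ ≤ _ := hbu
  obtain ⟨k, hk⟩ : ∃ k, m = k + 1 := ⟨m - 1, by omega⟩
  subst hk
  simp only [Nat.add_sub_cancel] at h1 ⊢
  nlinarith [h1, hsum, hg]

/-- The maximal-genus semigroup: multiples of m up to F, then everything past F. -/
lemma base_aux (m F : ℕ) (hm : 2 ≤ m) (hmF : m < F) (hdvd : ¬ m ∣ F) :
    ∃ S : Set ℕ, IsNumericalSemigroup S ∧ HasMultiplicity S m ∧
      Sᶜ.ncard = F - F / m ∧ HasFrobenius S F := by
  classical
  refine ⟨{x | (m ∣ x ∧ x < F) ∨ F < x}, ⟨?_, ?_, ?_⟩, ⟨?_, by omega, ?_⟩, ?_, ?_, ?_⟩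
  · exact Or.inl ⟨dvd_zero m, by omega⟩
  · rintro a (⟨hda, hla⟩ | hFa) b (⟨hdb, hlb⟩ | hFb)
    · rcases lt_trichotomy (a + b) F with h | h | h
      · exact Or.inl ⟨hda.add hdb, h⟩
      · exact absurd (h ▸ hda.add hdb) hdvd
      · exact Or.inr h
    · exact Or.inr (by omega)
    · exact Or.inr (by omega)
    · exact Or.inr (by omega)
  · apply Set.Finite.subset (Set.finite_Icc 0 F)
    intro x hx
    simp only [Set.mem_compl_iff, Set.mem_setOf_eq] at hx
    push_neg at hx
    simp only [Set.mem_Icc]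
    omega
  · exact Or.inl ⟨dvd_refl m, hmF⟩
  · rintro s (⟨hds, hls⟩ | hFs) hpos
    · exact Nat.le_of_dvd hpos hds
    · omega
  · have hc : {x : ℕ | (m ∣ x ∧ x < F) ∨ F < x}ᶜ
        = ↑((Finset.Icc 0 F).filter (fun x => ¬ m ∣ x)) := by
      ext x
      simp only [Set.mem_compl_iff, Set.mem_setOf_eq, Finset.coe_filter, Finset.mem_Icc]
      constructor
      · intro hx
        push_neg at hx
        refine ⟨⟨Nat.zero_le _, hx.2⟩, fun hdx => ?_⟩
        have hge := hx.1 hdx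
        have hxF : x = F := by omega
        exact hdvd (hxF ▸ hdx)
      · rintro ⟨⟨_, hxF⟩, hndx⟩
        push_neg
        exact ⟨fun hdx => absurd hdx hndx, hxF⟩
    rw [hc, Set.ncard_coe_finset]
    have hins : Finset.Icc 0 F = insert 0 (Finset.Ioc 0 F) := by
      ext x; simp only [Finset.mem_Icc, Finset.mem_insert, Finset.mem_Ioc]; omega
    have hpos : ((Finset.Icc 0 F).filter (fun x => m ∣ x)).card = F / m + 1 := by
      rw [hins, Finset.filter_insert]
      simp only [dvd_zero, if_true]
      rw [Finset.card_insert_of_notMem (by simp)]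
      rw [Nat.Ioc_filter_dvd_card_eq_div]
    have htot := Finset.card_filter_add_card_filter_not
      (s := Finset.Icc 0 F) (p := fun x => m ∣ x)
    rw [Nat.card_Icc, hpos] at htot
    have hdivle : F / m ≤ F := Nat.div_le_self F m
    omega
  · simp only [Set.mem_setOf_eq]
    push_neg
    exact ⟨fun hdx => absurd hdx hdvd, le_refl F⟩
  · intro x hx
    exact Or.inr hx

/-- Direct construction when `m < F < 2m`. -/
lemma direct_aux (m g F : ℕ) (hm : 2 ≤ m) (hg : m ≤ g) (hgF : g < F)
    (hmF : m < F) (hF2m : F < 2 * m) :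
    ∃ S : Set ℕ, IsNumericalSemigroup S ∧ HasMultiplicity S m ∧
      Sᶜ.ncard = g ∧ HasFrobenius S F := by
  classical
  refine ⟨{x | x = 0 ∨ (m ≤ x ∧ x < m + (F - g)) ∨ F < x},
    ⟨Or.inl rfl, ?_, ?_⟩, ⟨?_, by omega, ?_⟩, ?_, ?_, ?_⟩
  · rintro a (rfl | ha) b (rfl | hb)
    · exact Or.inl rfl
    · simpa using Or.inr hb
    · simpa using Or.inr ha
    · refine Or.inr (Or.inr ?_)
      omega
  · apply Set.Finite.subset (Set.finite_Icc 0 F)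
    intro x hx
    simp only [Set.mem_compl_iff, Set.mem_setOf_eq] at hx
    push_neg at hx
    simp only [Set.mem_Icc]
    omega
  · refine Or.inr (Or.inl ⟨le_refl m, ?_⟩)
    omega
  · rintro s (rfl | hs) hpos
    · omega
    · omega
  · have hc : {x : ℕ | x = 0 ∨ (m ≤ x ∧ x < m + (F - g)) ∨ F < x}ᶜ
        = ↑(Finset.Icc 1 (m - 1) ∪ Finset.Icc (m + (F - g)) F) := by
      ext x
      simp only [Set.mem_compl_iff, Set.mem_setOf_eq, Finset.coe_union, Set.mem_union,
        Finset.coe_Icc, Set.mem_Icc]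
      constructor
      · intro hx; push_neg at hx; omega
      · intro hx; push_neg; omega
    rw [hc, Set.ncard_coe_finset,
      Finset.card_union_of_disjoint (by
        rw [Finset.disjoint_left]
        intro a ha hb
        simp only [Finset.mem_Icc] at ha hb
        omega)]
    rw [Nat.card_Icc, Nat.card_Icc]
    omega
  · simp only [Set.mem_setOf_eq]
    push_neg
    omega
  · intro x hx
    exact Or.inr (Or.inr hx)

/-- Descent: enlarge a semigroup by one gap, decreasing genus by 1,
keeping multiplicity and Frobenius number. -/
lemma descent_aux (m F gS : ℕ) (hm : 2 ≤ m) (hF2m : 2 * m < F)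
    (S : Set ℕ) (hNS : IsNumericalSemigroup S) (hmul : HasMultiplicity S m)
    (hcard : Sᶜ.ncard = gS) (hFr : HasFrobenius S F)
    (hbig : F / 2 + 2 ≤ gS) :
    ∃ S' : Set ℕ, IsNumericalSemigroup S' ∧ HasMultiplicity S' m ∧
      S'ᶜ.ncard = gS - 1 ∧ HasFrobenius S' F := by
  classical
  obtain ⟨h0, hadd, hfin⟩ := hNS
  have hgap : ∀ y, y ∉ S → y ≤ F := ns_gap_le hFr
  -- there is a gap y > F/2 with F - y also a gap
  have hex : ∃ y, F < 2 * y ∧ y ∉ S ∧ F - y ∉ S := by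
    by_contra hcon
    push_neg at hcon
    have hmap : ∀ y ∈ Sᶜ, (if F < 2 * y then F - y else y) ∈ (↑(Finset.Icc 0 (F / 2)) : Set ℕ) := by
      intro y hy
      have hyF : y ≤ F := hgap y hy
      simp only [Finset.coe_Icc, Set.mem_Icc]
      split <;> omega
    have hinj : Set.InjOn (fun y => if F < 2 * y then F - y else y) Sᶜ := by
      intro a ha b hb hab
      simp only at hab
      have haF : a ≤ F := hgap a ha
      have hbF : b ≤ F := hgap b hb
      by_cases h2a : F < 2 * a <;> by_cases h2b : F < 2 * b <;>
        simp only [h2a, h2b, if_true, if_false, if_pos, if_neg, not_false_iff] at hab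
      · omega
      · exact absurd hab (by rintro rfl; exact hb (hcon a h2a ha))
      · exact absurd hab.symm (by rintro rfl; exact ha (hcon b h2b hb))
      · exact hab
    have hle := Set.ncard_le_ncard_of_injOn _ hmap hinj ((Finset.Icc 0 (F / 2)).finite_toSet)
    rw [hcard, Set.ncard_coe_finset, Nat.card_Icc] at hle
    omega
  obtain ⟨y₀, hy₀⟩ := hex
  set P : ℕ → Prop := fun y => F < 2 * y ∧ y ∉ S ∧ F - y ∉ S with hP
  set x := Nat.findGreatest P F with hx
  have hy₀F : y₀ ≤ F := hgap y₀ hy₀.2.1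
  have hPx : P x := Nat.findGreatest_spec hy₀F hy₀
  have hxF : x ≤ F := Nat.findGreatest_le F
  have hxne : x ≠ F := by
    intro h
    exact hPx.2.2 (by rw [h]; simpa using h0)
  -- key closure property
  have haddx : ∀ b ∈ S, 0 < b → x + b ∈ S := by
    intro b hb hbpos
    rcases lt_or_ge F (x + b) with h | h
    · exact hFr.2 _ h
    · by_contra hxb
      have hPxb : P (x + b) := by
        refine ⟨by omega, hxb, fun hmem => ?_⟩
        have := hadd _ hmem b hb
        have heq : F - (x + b) + b = F - x := by omega
        rw [heq] at this
        exact hPx.2.2 this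
      exact (Nat.findGreatest_is_greatest (P := P) (n := F) (by omega) h) hPxb
  refine ⟨insert x S, ⟨Set.mem_insert_of_mem _ h0, ?_, ?_⟩,
    ⟨Set.mem_insert_of_mem _ hmul.1, by omega, ?_⟩, ?_, ?_, ?_⟩
  · rintro a (rfl | ha) b (rfl | hb)
    · exact Set.mem_insert_of_mem _ (hFr.2 _ (by omega))
    · rcases Nat.eq_zero_or_pos b with rfl | hbpos
      · exact Set.mem_insert_iff.mpr (Or.inl rfl)
      · exact Set.mem_insert_of_mem _ (haddx b hb hbpos)
    · rcases Nat.eq_zero_or_pos a with rfl | hapos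
      · exact Set.mem_insert_iff.mpr (Or.inl (by omega))
      · exact Set.mem_insert_of_mem _ (by rw [Nat.add_comm]; exact haddx a ha hapos)
    · exact Set.mem_insert_of_mem _ (hadd a ha b hb)
  · exact Set.Finite.subset hfin (by intro z hz; simp only [Set.mem_compl_iff,
      Set.mem_insert_iff, not_or] at hz ⊢; exact hz.2)
  · rintro s (rfl | hs) hpos
    · omega
    · exact hmul.2.2 s hs hpos
  · have hcomp : (insert x S)ᶜ = Sᶜ \ {x} := by
      ext z
      simp only [Set.mem_compl_iff, Set.mem_insert_iff, Set.mem_diff,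
        Set.mem_singleton_iff, not_or]
      tauto
    rw [hcomp, Set.ncard_diff_singleton_of_mem (s := Sᶜ) (a := x) hPx.2.1, hcard]
  · simp only [Set.mem_insert_iff, not_or]
    exact ⟨fun h => hxne h.symm, hFr.1⟩
  · intro z hz
    exact Set.mem_insert_of_mem _ (hFr.2 z hz)

lemma ineq_iff_aux (m g F : ℕ) (hm : 2 ≤ m) (hdvd : ¬ m ∣ F) :
    m * g ≤ (m - 1) * (F + 1) ↔ g ≤ F - F / m := by
  obtain ⟨k, rfl⟩ : ∃ k, m = k + 2 := ⟨m - 2, by omega⟩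
  have hqr : (k + 2) * (F / (k + 2)) + F % (k + 2) = F := Nat.div_add_mod F (k + 2)
  set q := F / (k + 2) with hq
  set r := F % (k + 2) with hr
  have hr0 : r ≠ 0 := fun h => hdvd (Nat.dvd_of_mod_eq_zero h)
  have hrm : r < k + 2 := Nat.mod_lt _ (by omega)
  have hsub : k + 2 - 1 = k + 1 := by omega
  rw [hsub]
  have e1 : (k + 2) * q = (k + 1) * q + q := by ring
  have hFq : F - q = (k + 1) * q + r := by omega
  rw [hFq]
  constructor
  · intro h
    by_contra hc
    push_neg at hc
    nlinarith [h, hqr, hc]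
  · intro h
    nlinarith [h, hqr, hrm]

lemma backward_aux (m g F : ℕ) (hm : 2 ≤ m) (hg : m ≤ g) (hdvd : ¬ m ∣ F)
    (hmF : m < F) (h2 : F + 1 ≤ 2 * g) (hle : g ≤ F - F / m) :
    ∃ S : Set ℕ, IsNumericalSemigroup S ∧ HasMultiplicity S m ∧
      Sᶜ.ncard = g ∧ HasFrobenius S F := by
  have hq1 : 1 ≤ F / m := (Nat.one_le_div_iff (by omega)).mpr (le_of_lt hmF)
  have hqF : F / m ≤ F := Nat.div_le_self F m
  set Q := F / m with hQ
  rcases lt_or_ge F (2 * m) with hcase | hcase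
  · exact direct_aux m g F hm hg (by omega) hmF hcase
  · have hF2m : 2 * m < F := by
      rcases Nat.lt_or_ge (2 * m) F with h | h
      · exact h
      · have hFeq : F = 2 * m := by omega
        exact absurd (hFeq ▸ Dvd.intro 2 (by ring)) hdvd
    obtain ⟨d, hd⟩ : ∃ d, g + d = F - Q := ⟨F - Q - g, by omega⟩
    clear hle hg
    induction d generalizing g with
    | zero =>
      obtain ⟨S, hS1, hS2, hS3, hS4⟩ := base_aux m F hm hmF hdvd
      refine ⟨S, hS1, hS2, ?_, hS4⟩
      rw [hS3, ← hQ]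
      omega
    | succ n ih =>
      obtain ⟨S, hS1, hS2, hS3, hS4⟩ := ih (g + 1) (by omega) (by omega)
      obtain ⟨S', hT1, hT2, hT3, hT4⟩ :=
        descent_aux m F (g + 1) hm hF2m S hS1 hS2 hS3 hS4 (by omega)
      refine ⟨S', hT1, hT2, ?_, hT4⟩
      rw [hT3]
      omega

theorem stmt19 (m g F : ℕ) (hm : 2 ≤ m) (hg : m ≤ g) (hF : 0 < F)
    (hdvd : ¬ m ∣ F) :
    (∃ S : Set ℕ, IsNumericalSemigroup S ∧ HasMultiplicity S m ∧
        Sᶜ.ncard = g ∧ HasFrobenius S F) ↔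
      (⌈(m * g : ℚ) / ((m : ℚ) - 1)⌉ - 1 ≤ (F : ℤ) ∧ F ≤ 2 * g - 1) := by
  have hden : (0 : ℚ) < (m : ℚ) - 1 := by
    have : (2 : ℚ) ≤ (m : ℚ) := by exact_mod_cast hm
    linarith
  constructor
  · rintro ⟨S, hNS, hmul, hcard, hFr⟩
    obtain ⟨h2, h1⟩ := fwd_aux m g F hm S hNS hmul hcard hFr
    constructor
    · have hceil : (⌈(m * g : ℚ) / ((m : ℚ) - 1)⌉ : ℤ) ≤ (F : ℤ) + 1 := by
        rw [Int.ceil_le]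
        rw [div_le_iff₀ hden]
        have h1' : ((m * g : ℕ) : ℚ) ≤ (((m - 1) * (F + 1) : ℕ) : ℚ) := by exact_mod_cast h1
        push_cast [Nat.cast_sub (by omega : 1 ≤ m)] at h1'
        push_cast
        linarith
      omega
    · omega
  · rintro ⟨hc1, hc2⟩
    have h2 : F + 1 ≤ 2 * g := by omega
    have h1 : m * g ≤ (m - 1) * (F + 1) := by
      have hceil : (⌈(m * g : ℚ) / ((m : ℚ) - 1)⌉ : ℤ) ≤ (F : ℤ) + 1 := by omega
      rw [Int.ceil_le, div_le_iff₀ hden] at hceil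
      have h1' : ((m * g : ℕ) : ℚ) ≤ (((m - 1) * (F + 1) : ℕ) : ℚ) := by
        push_cast [Nat.cast_sub (by omega : 1 ≤ m)]
        push_cast at hceil
        linarith
      exact_mod_cast h1'
    have hmF : m < F := by
      by_contra hc
      push_neg at hc
      obtain ⟨k, rfl⟩ : ∃ k, m = k + 2 := ⟨m - 2, by omega⟩
      rw [show k + 2 - 1 = k + 1 from rfl] at h1
      have a1 : (k + 2) * (k + 2) ≤ (k + 2) * g := Nat.mul_le_mul_left _ hg
      have a2 : (k + 1) * (F + 1) ≤ (k + 1) * (k + 3) := Nat.mul_le_mul_left _ (by omega)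
      nlinarith [h1, a1, a2]
    exact backward_aux m g F hm hg hdvd hmF h2 ((ineq_iff_aux m g F hm hdvd).mp h1)
end NSaux
end
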